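/- arXiv:2005.06285 — 5 statements merged into one kernel-verified Lean document; each statement's English description precedes it below -/
import Mathlib

section
/- For every pushdown system P = (Q, Γ, A, Δ), every q ∈ Q, every linked pair (α, β), all γ, γ′ ∈ RegStr(Γ), and all i, j ∈ ℕ: if rβ^iγ ∼ rβ^jγ for all r ∈ eats_α(q), and i ≠ j, then qαβ^iγ ∼ qαβ^jγ ∼ qαβ^ω. -/
/-- Stack contents: finite (a list in `Γ*`) or infinite (a stream, used for `αβ^ω`). -/
def SC (Γ : Type) : Type := List Γ ⊕ Stream' Γ

namespace SC

/-- Put one symbol on top of a stack content. -/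
def cons {Γ : Type} (X : Γ) : SC Γ → SC Γ
  | Sum.inl l => Sum.inl (X :: l)
  | Sum.inr s => Sum.inr (Stream'.cons X s)

/-- Put a finite word on top of a stack content. -/
def push {Γ : Type} (γ : List Γ) : SC Γ → SC Γ
  | Sum.inl l => Sum.inl (γ ++ l)
  | Sum.inr s => Sum.inr (Stream'.appendStream' γ s)

end SC

/-- `listPow β i = β^i`, the `i`-fold concatenation of `β`. -/
def listPow {Γ : Type} (β : List Γ) : ℕ → List Γ
  | 0 => []
  | n + 1 => β ++ listPow β n

/-- The infinite stack content `β^ω` (for nonempty `β`). -/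
def cycSC {Γ : Type} (β : List Γ) (h : β ≠ []) : SC Γ := Sum.inr (Stream'.cycle β h)

/-- A pushdown system, given by its (finite) transition relation
`Δ ⊆ Q × Γ × A × Q × Γ*`. -/
structure PDS (Q Γ A : Type) where
  Δ : Finset (Q × Γ × A × Q × List Γ)

namespace PDS

variable {Q Γ A : Type}

/-- The size `|P| = |Q| + |Γ| + |A| + |Δ|` of a pushdown system. -/
def size (P : PDS Q Γ A) [Fintype Q] [Fintype Γ] [Fintype A] : ℕ :=
  Fintype.card Q + Fintype.card Γ + Fintype.card A + P.Δ.card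

/-- Push-pop normal form: every transition pushes a word of length at most 2. -/
def PushPop (P : PDS Q Γ A) : Prop := ∀ δ ∈ P.Δ, δ.2.2.2.2.length ≤ 2

/-- The `a`-labeled step relation on configurations: `pXσ →_a qγσ`. -/
def Step (P : PDS Q Γ A) (a : A) (s t : Q × SC Γ) : Prop :=
  ∃ p X q γ σ, (p, X, a, q, γ) ∈ P.Δ ∧ s = (p, SC.cons X σ) ∧ t = (q, SC.push γ σ)

/-- A step with some label. -/
def StepAny (P : PDS Q Γ A) (s t : Q × SC Γ) : Prop := ∃ a, P.Step a s t

/-- Reachability `→*`. -/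
def Reach (P : PDS Q Γ A) : (Q × SC Γ) → (Q × SC Γ) → Prop :=
  Relation.ReflTransGen P.StepAny

/-- `StepN P n s t` : there is a path of length exactly `n` from `s` to `t`. -/
def StepN (P : PDS Q Γ A) : ℕ → (Q × SC Γ) → (Q × SC Γ) → Prop
  | 0, s, t => s = t
  | n + 1, s, t => ∃ u, P.StepAny s u ∧ StepN P n u t

/-- `R` is a bisimulation. -/
def IsBisim (P : PDS Q Γ A) (R : (Q × SC Γ) → (Q × SC Γ) → Prop) : Prop :=
  ∀ s t, R s t → ∀ a,
    (∀ s', P.Step a s s' → ∃ t', P.Step a t t' ∧ R s' t') ∧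
    (∀ t', P.Step a t t' → ∃ s', P.Step a s s' ∧ R s' t')

/-- Bisimilarity `s ∼ t`. -/
def Bisim (P : PDS Q Γ A) (s t : Q × SC Γ) : Prop := ∃ R, P.IsBisim R ∧ R s t

/-- `eats_α(T) = { r | ∃ q ∈ T, qα →* r }`. -/
def eats (P : PDS Q Γ A) (α : List Γ) (T : Set Q) : Set Q :=
  {r | ∃ q ∈ T, P.Reach (q, Sum.inl α) (r, Sum.inl ([] : List Γ))}

/-- `(α, β)` (with `β` nonempty) is a linked pair if `eats_α = eats_{αβ}`
and `eats_β = eats_{ββ}`. -/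
def LinkedPair (P : PDS Q Γ A) (α β : List Γ) : Prop :=
  β ≠ [] ∧ P.eats α = P.eats (α ++ β) ∧ P.eats β = P.eats (β ++ β)

/-- Applying one concrete transition `δ = (p, X, a, q, γ)`. -/
def TStep (P : PDS Q Γ A) (δ : Q × Γ × A × Q × List Γ) (s t : Q × SC Γ) : Prop :=
  δ ∈ P.Δ ∧ ∃ σ, s = (δ.1, SC.cons δ.2.1 σ) ∧ t = (δ.2.2.2.1, SC.push δ.2.2.2.2 σ)

/-- `RunTo P ρ s t` : applying the sequence of transitions `ρ` starting from `s`
yields `t`. -/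
def RunTo (P : PDS Q Γ A) : List (Q × Γ × A × Q × List Γ) → (Q × SC Γ) → (Q × SC Γ) → Prop
  | [], s, t => s = t
  | δ :: ρ, s, t => ∃ u, P.TStep δ s u ∧ RunTo P ρ u t

/-- Bisimulation classes of configurations reachable from `s₀`
(the states of the bisimulation quotient of `L(P, s₀)`). -/
def classes (P : PDS Q Γ A) (s₀ : Q × SC Γ) : Set (Set (Q × SC Γ)) :=
  {c | ∃ s, P.Reach s₀ s ∧ c = {t | P.Reach s₀ t ∧ P.Bisim s t}}

/-- The `a`-labeled step relation on bisimulation classes. -/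
def classStep (P : PDS Q Γ A) (a : A) (c d : Set (Q × SC Γ)) : Prop :=
  ∃ s ∈ c, ∃ t ∈ d, P.Step a s t

end PDS

/-- `StackGrowth` of a single transition: `|γ| − 1`. -/
def tGrowth {Q Γ A : Type} (δ : Q × Γ × A × Q × List Γ) : ℤ := (δ.2.2.2.2.length : ℤ) - 1

/-- `StackGrowth` of a run. -/
def runGrowth {Q Γ A : Type} (ρ : List (Q × Γ × A × Q × List Γ)) : ℤ := (ρ.map tGrowth).sum

/-- A run is augmenting if every prefix has nonnegative stack growth. -/
def Augmenting {Q Γ A : Type} (ρ : List (Q × Γ × A × Q × List Γ)) : Prop :=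
  ∀ i ≤ ρ.length, 0 ≤ runGrowth (ρ.take i)

/-- A digging sequence `(r 0, …, r h)` for `(q, α, β)`. -/
def DiggingSeq {Q Γ A : Type} (P : PDS Q Γ A) (q : Q) (α β : List Γ)
    (h : ℕ) (r : ℕ → Q) : Prop :=
  r 0 ∈ P.eats α {q} ∧ ∀ d, 1 ≤ d → d ≤ h → r d ∈ P.eats β {r (d - 1)}

/-- A `β^ω`-avoiding digging sequence `(r 0, …, r h)` for `(q, α, β)`,
with respect to the configuration `qαβ^eγ` (where `e ≥ 1`). -/
def Avoiding {Q Γ A : Type} (P : PDS Q Γ A) (q : Q) (α β γ : List Γ) (hβ : β ≠ [])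
    (e h : ℕ) (r : ℕ → Q) : Prop :=
  DiggingSeq P q α β h r ∧
  (∃ r' ∈ P.eats β {r 0},
      ¬ P.Bisim (r', Sum.inl (listPow β (e - 1) ++ γ)) (r', cycSC β hβ)) ∧
  ∀ d, 1 ≤ d → d ≤ h →
    ¬ P.Bisim (r d, Sum.inl (listPow β (e - d) ++ γ)) (r d, cycSC β hβ)

/-- The class of elementary functions `ℕ^k → ℕ`: the smallest class containing
constants, projections, addition, multiplication and exponentiation, and closed
under composition. -/
inductive ElementaryFun : {k : ℕ} → ((Fin k → ℕ) → ℕ) → Prop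
  | const {k : ℕ} (c : ℕ) : ElementaryFun (fun _ : Fin k → ℕ => c)
  | proj {k : ℕ} (i : Fin k) : ElementaryFun (fun v : Fin k → ℕ => v i)
  | add : ElementaryFun (fun v : Fin 2 → ℕ => v 0 + v 1)
  | mul : ElementaryFun (fun v : Fin 2 → ℕ => v 0 * v 1)
  | exp : ElementaryFun (fun v : Fin 2 → ℕ => v 0 ^ v 1)
  | comp {k m : ℕ} (f : (Fin m → ℕ) → ℕ) (g : Fin m → (Fin k → ℕ) → ℕ) :
      ElementaryFun f → (∀ i, ElementaryFun (g i)) →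
      ElementaryFun (fun v : Fin k → ℕ => f (fun i => g i v))

/-- A binary function `ℕ² → ℕ` is elementary. -/
def Elementary2 (φ : ℕ → ℕ → ℕ) : Prop :=
  ElementaryFun (fun v : Fin 2 → ℕ => φ (v 0) (v 1))

/-- A ternary function `ℕ³ → ℕ` is elementary. -/
def Elementary3 (φ : ℕ → ℕ → ℕ → ℕ) : Prop :=
  ElementaryFun (fun v : Fin 3 → ℕ => φ (v 0) (v 1) (v 2))

/-- `prodSeg w i len = w (i+1) * w (i+2) * ⋯ * w (i+len+1)` in a semigroup. -/
def prodSeg {S : Type} [Semigroup S] (w : ℕ → S) (i : ℕ) : ℕ → S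
  | 0 => w (i + 1)
  | len + 1 => prodSeg w i len * w (i + len + 2)

/-- `catSeg α i len = α (i+1) ++ α (i+2) ++ ⋯ ++ α (i+len+1)`. -/
def catSeg {Γ : Type} (α : ℕ → List Γ) (i : ℕ) : ℕ → List Γ
  | 0 => α (i + 1)
  | len + 1 => catSeg α i len ++ α (i + len + 2)


namespace SCAux

variable {Γ : Type}
lemma push_nil (σ : SC Γ) : SC.push [] σ = σ := by
  cases σ with
  | inl l => rfl
  | inr s => simp only [SC.push, Stream'.nil_append_stream]; rfl
lemma push_cons (X : Γ) (l : List Γ) (σ : SC Γ) :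
    SC.push (X :: l) σ = SC.cons X (SC.push l σ) := by
  cases σ with
  | inl l' => rfl
  | inr s => simp only [SC.push, SC.cons, Stream'.cons_append_stream]; rfl
lemma push_append (l₁ l₂ : List Γ) (σ : SC Γ) :
    SC.push (l₁ ++ l₂) σ = SC.push l₁ (SC.push l₂ σ) := by
  induction l₁ with
  | nil => rw [List.nil_append, push_nil]
  | cons X l ih => rw [List.cons_append, push_cons, push_cons, ih]
lemma cons_inj {X Y : Γ} {σ τ : SC Γ} (h : SC.cons X σ = SC.cons Y τ) :
    X = Y ∧ σ = τ := by
  cases σ with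
  | inl l => cases τ with
    | inl l' =>
      have h' : Sum.inl (X :: l) = (Sum.inl (Y :: l') : SC Γ) := h
      injection h' with h''
      injection h'' with h1 h2
      exact ⟨h1, by rw [h2]⟩
    | inr s => exact absurd h (by simp [SC.cons])
  | inr s => cases τ with
    | inl l' => exact absurd h (by simp [SC.cons])
    | inr s' =>
      have h' : Sum.inr (Stream'.cons X s) = (Sum.inr (Stream'.cons Y s') : SC Γ) := h
      injection h' with h''
      refine ⟨?_, ?_⟩
      · have := congrArg Stream'.head h''
        simpa using this
      · have := congrArg Stream'.tail h''
        simp only [Stream'.tail_cons] at this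
        rw [this]
lemma cons_eq_inl {X : Γ} {σ : SC Γ} {θ : List Γ} (h : SC.cons X σ = Sum.inl θ) :
    ∃ l, σ = Sum.inl l ∧ θ = X :: l := by
  cases σ with
  | inl l =>
    have h' : Sum.inl (X :: l) = (Sum.inl θ : SC Γ) := h
    injection h' with h''
    exact ⟨l, rfl, h''.symm⟩
  | inr s => exact absurd h (by simp [SC.cons])
end SCAux

namespace PDSAux
open SCAux
variable {Q Γ A : Type} (P : PDS Q Γ A)

lemma step_iff (a : A) (p : Q) (X : Γ) (σ : SC Γ) (t : Q × SC Γ) :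
    P.Step a (p, SC.cons X σ) t ↔
      ∃ q γ₀, (p, X, a, q, γ₀) ∈ P.Δ ∧ t = (q, SC.push γ₀ σ) := by
  constructor
  · rintro ⟨p', X', q, γ₀, σ', hδ, h1, h2⟩
    injection h1 with hp hc
    obtain ⟨hX, hσ⟩ := cons_inj hc
    subst hp; subst hX; subst hσ
    exact ⟨q, γ₀, hδ, h2⟩
  · rintro ⟨q, γ₀, hδ, rfl⟩
    exact ⟨p, X, q, γ₀, σ, hδ, rfl, rfl⟩

lemma step_src {a : A} {s t : Q × SC Γ} (h : P.Step a s t) :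
    ∃ p X σ, s = (p, SC.cons X σ) := by
  obtain ⟨p, X, q, γ₀, σ, _, hs, _⟩ := h
  exact ⟨p, X, σ, hs⟩

lemma isBisim_bisim : P.IsBisim P.Bisim := by
  rintro s t ⟨R, hR, hst⟩ a
  obtain ⟨h1, h2⟩ := hR s t hst a
  exact ⟨fun s' hs' => (h1 s' hs').imp fun t' ⟨ht', h⟩ => ⟨ht', R, hR, h⟩,
         fun t' ht' => (h2 t' ht').imp fun s' ⟨hs', h⟩ => ⟨hs', R, hR, h⟩⟩

lemma bisim_refl (s : Q × SC Γ) : P.Bisim s s := by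
  refine ⟨Eq, ?_, rfl⟩
  rintro s t rfl a
  exact ⟨fun s' h => ⟨s', h, rfl⟩, fun t' h => ⟨t', h, rfl⟩⟩

lemma bisim_symm {s t : Q × SC Γ} (h : P.Bisim s t) : P.Bisim t s := by
  obtain ⟨R, hR, hst⟩ := h
  refine ⟨fun x y => R y x, ?_, hst⟩
  intro x y hxy a
  obtain ⟨h1, h2⟩ := hR y x hxy a
  exact ⟨fun s' hs' => (h2 s' hs').imp fun t' ⟨ht', h⟩ => ⟨ht', h⟩,
         fun t' ht' => (h1 t' ht').imp fun s' ⟨hs', h⟩ => ⟨hs', h⟩⟩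

lemma bisim_trans {s t u : Q × SC Γ} (h1 : P.Bisim s t) (h2 : P.Bisim t u) :
    P.Bisim s u := by
  obtain ⟨R1, hR1, hst⟩ := h1
  obtain ⟨R2, hR2, htu⟩ := h2
  refine ⟨Relation.Comp R1 R2, ?_, t, hst, htu⟩
  rintro x z ⟨y, hxy, hyz⟩ a
  obtain ⟨f1, b1⟩ := hR1 x y hxy a
  obtain ⟨f2, b2⟩ := hR2 y z hyz a
  constructor
  · intro s' hs'
    obtain ⟨y', hy', hRy⟩ := f1 s' hs'
    obtain ⟨z', hz', hRz⟩ := f2 y' hy'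
    exact ⟨z', hz', y', hRy, hRz⟩
  · intro z' hz'
    obtain ⟨y', hy', hRy⟩ := b2 z' hz'
    obtain ⟨x', hx', hRx⟩ := b1 y' hy'
    exact ⟨x', hx', y', hRx, hRy⟩

lemma reach_push_aux : ∀ (s t : Q × SC Γ), P.Reach s t →
    ∀ (p : Q) (θ : List Γ) (r : Q) (θ' : List Γ) (σ : SC Γ),
    s = (p, Sum.inl θ) → t = (r, Sum.inl θ') →
    P.Reach (p, SC.push θ σ) (r, SC.push θ' σ) := by
  intro s t h
  induction h using Relation.ReflTransGen.head_induction_on with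
  | refl =>
    rintro p θ r θ' σ rfl ht
    injection ht with h1 h2
    injection h2 with h3
    subst h1; subst h3
    exact Relation.ReflTransGen.refl
  | head hstep _ ih =>
    rintro p θ r θ' σ rfl rfl
    obtain ⟨a, p₁, X, q₁, γ₀, σ₀, hδ, hs, hu⟩ := hstep
    injection hs with hp hc
    subst hp
    obtain ⟨l, rfl, rfl⟩ := cons_eq_inl hc.symm
    have hu' : _ = (q₁, Sum.inl (γ₀ ++ l)) := hu
    have step1 : P.StepAny (p, SC.push (X :: l) σ) (q₁, SC.push (γ₀ ++ l) σ) := by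
      refine ⟨a, p, X, q₁, γ₀, SC.push l σ, hδ, ?_, ?_⟩
      · rw [push_cons]
      · rw [push_append]
    exact Relation.ReflTransGen.head step1 (ih q₁ (γ₀ ++ l) r θ' σ hu' rfl)

lemma reach_split : ∀ (s t : Q × SC Γ), P.Reach s t →
    ∀ (p : Q) (θ η : List Γ) (r : Q),
    s = (p, Sum.inl (θ ++ η)) → t = (r, Sum.inl ([] : List Γ)) →
    ∃ r', P.Reach (p, Sum.inl θ) (r', Sum.inl ([] : List Γ)) ∧
      P.Reach (r', Sum.inl η) (r, Sum.inl ([] : List Γ)) := by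
  intro s t h
  induction h using Relation.ReflTransGen.head_induction_on with
  | refl =>
    rintro p θ η r rfl ht
    injection ht with h1 h2
    injection h2 with h3
    subst h1
    obtain ⟨rfl, rfl⟩ := List.append_eq_nil_iff.mp h3
    exact ⟨p, Relation.ReflTransGen.refl, Relation.ReflTransGen.refl⟩
  | @head s u hstep hrest ih =>
    rintro p θ η r rfl rfl
    cases θ with
    | nil =>
      exact ⟨p, Relation.ReflTransGen.refl,
        Relation.ReflTransGen.head hstep hrest⟩
    | cons X θ₀ =>
      obtain ⟨a, p₁, X', q₁, γ₀, σ₀, hδ, hs, hu⟩ := hstep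
      injection hs with hp hc
      subst hp
      obtain ⟨l, hσ₀, hl⟩ := cons_eq_inl hc.symm
      injection hl with hX hl'
      subst hX
      subst hσ₀
      have hu' : u = (q₁, Sum.inl ((γ₀ ++ θ₀) ++ η)) := by
        rw [hu]
        have h5 : γ₀ ++ l = (γ₀ ++ θ₀) ++ η := by
          rw [List.append_assoc]
          exact congrArg _ hl'.symm
        exact congrArg _ (congrArg _ h5)
      obtain ⟨r', h1, h2⟩ := ih q₁ (γ₀ ++ θ₀) η r hu' rfl
      refine ⟨r', ?_, h2⟩
      exact Relation.ReflTransGen.head ⟨a, p, X, q₁, γ₀, Sum.inl θ₀, hδ, rfl, rfl⟩ h1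

lemma eats_append (θ η : List Γ) (T : Set Q) :
    P.eats (θ ++ η) T = P.eats η (P.eats θ T) := by
  ext r
  constructor
  · rintro ⟨q, hq, hreach⟩
    obtain ⟨r', h1, h2⟩ := reach_split P _ _ hreach q θ η r rfl rfl
    exact ⟨r', ⟨q, hq, h1⟩, h2⟩
  · rintro ⟨r', ⟨q, hq, h1⟩, h2⟩
    refine ⟨q, hq, ?_⟩
    have h3 := reach_push_aux P _ _ h1 q θ r' [] (Sum.inl η) rfl rfl
    have e1 : SC.push θ (Sum.inl η) = (Sum.inl (θ ++ η) : SC Γ) := rfl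
    have e2 : SC.push [] (Sum.inl η) = (Sum.inl η : SC Γ) := push_nil _
    rw [e1, e2] at h3
    exact Relation.ReflTransGen.trans h3 h2

lemma listPow_add (β : List Γ) (m n : ℕ) :
    listPow β (m + n) = listPow β m ++ listPow β n := by
  induction m with
  | zero => simp [listPow]
  | succ m ih =>
    have : m + 1 + n = (m + n) + 1 := by omega
    rw [this]
    show β ++ listPow β (m + n) = (β ++ listPow β m) ++ listPow β n
    rw [ih, List.append_assoc]

lemma eats_pow {α β : List Γ} (hlp : P.LinkedPair α β) (k : ℕ) (T : Set Q) :
    P.eats (α ++ listPow β k) T = P.eats α T := by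
  induction k with
  | zero => simp [listPow]
  | succ k ih =>
    have e : α ++ listPow β (k + 1) = (α ++ β) ++ listPow β k := by
      show α ++ (β ++ listPow β k) = (α ++ β) ++ listPow β k
      rw [List.append_assoc]
    rw [e, eats_append, ← hlp.2.1, ← eats_append, ih]

/-- Core context lemma: a common finite top `θ` can be peeled off. -/
lemma bisim_ctx (σ₁ σ₂ : SC Γ) (p : Q) (θ : List Γ)
    (h : ∀ r, P.Reach (p, Sum.inl θ) (r, Sum.inl ([] : List Γ)) →
      P.Bisim (r, σ₁) (r, σ₂)) :
    P.Bisim (p, SC.push θ σ₁) (p, SC.push θ σ₂) := by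
  refine ⟨fun s t => (∃ p' θ', s = (p', SC.push θ' σ₁) ∧ t = (p', SC.push θ' σ₂) ∧
      ∀ r, P.Reach (p', Sum.inl θ') (r, Sum.inl ([] : List Γ)) →
        P.Bisim (r, σ₁) (r, σ₂)) ∨ P.Bisim s t,
    ?_, Or.inl ⟨p, θ, rfl, rfl, h⟩⟩
  clear h
  intro s t hst a
  rcases hst with ⟨p', θ', rfl, rfl, hcond⟩ | hb
  · cases θ' with
    | nil =>
      have hb := hcond p' Relation.ReflTransGen.refl
      rw [push_nil, push_nil]
      obtain ⟨h1, h2⟩ := isBisim_bisim P _ _ hb a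
      exact ⟨fun s' hs' => (h1 s' hs').imp fun t' ⟨ht', hx⟩ => ⟨ht', Or.inr hx⟩,
             fun t' ht' => (h2 t' ht').imp fun s' ⟨hs', hx⟩ => ⟨hs', Or.inr hx⟩⟩
    | cons X θ₀ =>
      have hcond' : ∀ (q₁ : Q) (γ₀ : List Γ), (p', X, a, q₁, γ₀) ∈ P.Δ →
          ∀ r, P.Reach (q₁, Sum.inl (γ₀ ++ θ₀)) (r, Sum.inl ([] : List Γ)) →
            P.Bisim (r, σ₁) (r, σ₂) := by
        intro q₁ γ₀ hδ r hr
        apply hcond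
        exact Relation.ReflTransGen.head
          ⟨a, p', X, q₁, γ₀, Sum.inl θ₀, hδ, rfl, rfl⟩ hr
      constructor
      · intro s' hs'
        rw [push_cons] at hs'
        obtain ⟨q₁, γ₀, hδ, rfl⟩ := (step_iff P a p' X _ s').1 hs'
        refine ⟨(q₁, SC.push γ₀ (SC.push θ₀ σ₂)), ?_,
          Or.inl ⟨q₁, γ₀ ++ θ₀, ?_, ?_, hcond' q₁ γ₀ hδ⟩⟩
        · rw [push_cons]
          exact (step_iff P a p' X _ _).2 ⟨q₁, γ₀, hδ, rfl⟩
        · rw [push_append]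
        · rw [push_append]
      · intro t' ht'
        rw [push_cons] at ht'
        obtain ⟨q₁, γ₀, hδ, rfl⟩ := (step_iff P a p' X _ t').1 ht'
        refine ⟨(q₁, SC.push γ₀ (SC.push θ₀ σ₁)), ?_,
          Or.inl ⟨q₁, γ₀ ++ θ₀, ?_, ?_, hcond' q₁ γ₀ hδ⟩⟩
        · rw [push_cons]
          exact (step_iff P a p' X _ _).2 ⟨q₁, γ₀, hδ, rfl⟩
        · rw [push_append]
        · rw [push_append]
  · obtain ⟨h1, h2⟩ := isBisim_bisim P _ _ hb a
    exact ⟨fun s' hs' => (h1 s' hs').imp fun t' ⟨ht', hx⟩ => ⟨ht', Or.inr hx⟩,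
           fun t' ht' => (h2 t' ht').imp fun s' ⟨hs', hx⟩ => ⟨hs', Or.inr hx⟩⟩

lemma chain {α β : List Γ} (hlp : P.LinkedPair α β) (q : Q) (γ : SC Γ) {i j : ℕ}
    (hij : i < j)
    (hbis : ∀ r ∈ P.eats α {q},
      P.Bisim (r, SC.push (listPow β i) γ) (r, SC.push (listPow β j) γ)) :
    ∀ k, P.Bisim (q, SC.push (α ++ listPow β i) γ)
      (q, SC.push (α ++ listPow β (i + k * (j - i))) γ) := by
  intro k
  induction k with
  | zero => simpa using bisim_refl P _
  | succ k ih =>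
    refine bisim_trans P ih ?_
    have step := bisim_ctx P (SC.push (listPow β i) γ) (SC.push (listPow β j) γ)
      q (α ++ listPow β (k * (j - i))) ?_
    · have e1 : ∀ m : ℕ,
          SC.push (α ++ listPow β (k * (j - i))) (SC.push (listPow β m) γ)
            = SC.push (α ++ listPow β (k * (j - i) + m)) γ := by
        intro m
        rw [listPow_add, ← push_append, ← List.append_assoc]
      rw [e1 i, e1 j] at step
      have e2 : k * (j - i) + i = i + k * (j - i) := by omega
      have e3 : k * (j - i) + j = i + (k + 1) * (j - i) := by rw [Nat.succ_mul]; omega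
      rw [e2, e3] at step
      exact step
    · intro r hr
      exact hbis r ((eats_pow P hlp (k * (j - i)) {q}).le ⟨q, rfl, hr⟩)

lemma cyc_push {β : List Γ} (hβ : β ≠ []) :
    SC.push β (cycSC β hβ) = cycSC β hβ :=
  congrArg Sum.inr (Stream'.cycle_eq β hβ).symm

lemma bisim_omega {β : List Γ} (hβ : β ≠ []) (γ : SC Γ)
    (s₀ : Q × SC Γ) (p : Q) (θ : List Γ)
    (hcond : ∀ n, ∃ m, n ≤ m ∧ P.Bisim s₀ (p, SC.push (θ ++ listPow β m) γ)) :
    P.Bisim s₀ (p, SC.push θ (cycSC β hβ)) := by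
  classical
  refine ⟨fun s t => ∃ p' θ', t = (p', SC.push θ' (cycSC β hβ)) ∧
      ∀ n, ∃ m, n ≤ m ∧ P.Bisim s (p', SC.push (θ' ++ listPow β m) γ), ?_,
    p, θ, rfl, hcond⟩
  clear hcond
  rintro s t ⟨p', θ', rfl, hc⟩ a
  -- normalize to nonempty θ'
  obtain ⟨θ'', hne, ht, hc⟩ : ∃ θ'', θ'' ≠ [] ∧
      SC.push θ' (cycSC β hβ) = SC.push θ'' (cycSC β hβ) ∧
      ∀ n, ∃ m, n ≤ m ∧ P.Bisim s (p', SC.push (θ'' ++ listPow β m) γ) := by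
    cases θ' with
    | nil =>
      refine ⟨β, hβ, by rw [push_nil, cyc_push], ?_⟩
      intro n
      obtain ⟨m, hm, hb⟩ := hc (n + 1)
      obtain ⟨m', rfl⟩ : ∃ m', m = m' + 1 := ⟨m - 1, by omega⟩
      refine ⟨m', by omega, ?_⟩
      have e : SC.push (β ++ listPow β m') γ = SC.push ([] ++ listPow β (m' + 1)) γ := by
        rw [List.nil_append]
        rfl
      rw [e]
      exact hb
    | cons Y l => exact ⟨Y :: l, by simp, rfl, hc⟩
  rw [ht]
  clear ht
  obtain ⟨X, θ₀, rfl⟩ : ∃ X θ₀, θ'' = X :: θ₀ := by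
    cases θ'' with
    | nil => exact absurd rfl hne
    | cons Y l => exact ⟨Y, l, rfl⟩
  constructor
  · -- forward: s steps, t matches
    intro s' hs'
    have Hδ : ∀ n : ℕ, ∃ d : {x // x ∈ P.Δ}, ∃ m, n ≤ m ∧ ∃ (q₁ : Q) (γ₀ : List Γ),
        d.1 = (p', X, a, q₁, γ₀) ∧
        P.Bisim s' (q₁, SC.push ((γ₀ ++ θ₀) ++ listPow β m) γ) := by
      intro n
      obtain ⟨m, hm, hb⟩ := hc n
      have hb' : P.Bisim s (p', SC.cons X (SC.push (θ₀ ++ listPow β m) γ)) := by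
        rw [← push_cons, ← List.cons_append]
        exact hb
      obtain ⟨u, hu, hbu⟩ := (isBisim_bisim P _ _ hb' a).1 s' hs'
      obtain ⟨q₁, γ₀, hδ, rfl⟩ := (step_iff P a p' X _ u).1 hu
      refine ⟨⟨_, hδ⟩, m, hm, q₁, γ₀, rfl, ?_⟩
      rw [List.append_assoc, push_append]
      exact hbu
    choose f hf using Hδ
    obtain ⟨d, hd⟩ := Finite.exists_infinite_fiber f
    have hinf : (f ⁻¹' {d}).Infinite := Set.infinite_coe_iff.mp hd
    obtain ⟨n₀, hn₀⟩ := hinf.nonempty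
    obtain ⟨m₀, -, q₁, γ₀, hdv, -⟩ := hf n₀
    have hfn₀ : f n₀ = d := hn₀
    rw [hfn₀] at hdv
    refine ⟨(q₁, SC.push (γ₀ ++ θ₀) (cycSC β hβ)), ?_, q₁, γ₀ ++ θ₀, rfl, ?_⟩
    · rw [push_cons]
      refine (step_iff P a p' X _ _).2 ⟨q₁, γ₀, hdv ▸ d.2, ?_⟩
      rw [push_append]
    · intro n
      obtain ⟨n', hn', hlt⟩ := hinf.exists_gt n
      obtain ⟨m, hm, q₁', γ₀', hdv', hb⟩ := hf n'
      have hfn' : f n' = d := hn'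
      rw [hfn', hdv] at hdv'
      simp only [Prod.mk.injEq] at hdv'
      obtain ⟨-, -, -, rfl, rfl⟩ := hdv'
      exact ⟨m, by omega, hb⟩
  · -- backward: t steps, s matches
    intro t' ht'
    rw [push_cons] at ht'
    obtain ⟨q₁, γ₀, hδ, rfl⟩ := (step_iff P a p' X _ t').1 ht'
    obtain ⟨m₀, -, hb₀⟩ := hc 0
    have hb₀' : P.Bisim s (p', SC.cons X (SC.push (θ₀ ++ listPow β m₀) γ)) := by
      rw [← push_cons, ← List.cons_append]
      exact hb₀
    obtain ⟨s₁, hs₁, -⟩ := (isBisim_bisim P _ _ hb₀' a).2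
      (q₁, SC.push γ₀ (SC.push (θ₀ ++ listPow β m₀) γ))
      ((step_iff P a p' X _ _).2 ⟨q₁, γ₀, hδ, rfl⟩)
    obtain ⟨ps, Xs, σs, rfl⟩ := step_src P hs₁
    have Hδ : ∀ n : ℕ, ∃ d : {x // x ∈ P.Δ}, ∃ m, n ≤ m ∧ ∃ (q₂ : Q) (γ₂ : List Γ),
        d.1 = (ps, Xs, a, q₂, γ₂) ∧
        P.Bisim (q₂, SC.push γ₂ σs) (q₁, SC.push ((γ₀ ++ θ₀) ++ listPow β m) γ) := by
      intro n
      obtain ⟨m, hm, hb⟩ := hc n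
      have hb' : P.Bisim (ps, SC.cons Xs σs)
          (p', SC.cons X (SC.push (θ₀ ++ listPow β m) γ)) := by
        rw [← push_cons, ← List.cons_append]
        exact hb
      obtain ⟨s₂, hs₂, hbs⟩ := (isBisim_bisim P _ _ hb' a).2
        (q₁, SC.push γ₀ (SC.push (θ₀ ++ listPow β m) γ))
        ((step_iff P a p' X _ _).2 ⟨q₁, γ₀, hδ, rfl⟩)
      obtain ⟨q₂, γ₂, hδ₂, rfl⟩ := (step_iff P a ps Xs σs s₂).1 hs₂
      refine ⟨⟨_, hδ₂⟩, m, hm, q₂, γ₂, rfl, ?_⟩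
      rw [List.append_assoc, push_append]
      exact hbs
    choose f hf using Hδ
    obtain ⟨d, hd⟩ := Finite.exists_infinite_fiber f
    have hinf : (f ⁻¹' {d}).Infinite := Set.infinite_coe_iff.mp hd
    obtain ⟨n₀, hn₀⟩ := hinf.nonempty
    obtain ⟨m₁, -, q₂, γ₂, hdv, -⟩ := hf n₀
    have hfn₀ : f n₀ = d := hn₀
    rw [hfn₀] at hdv
    refine ⟨(q₂, SC.push γ₂ σs),
      (step_iff P a ps Xs σs _).2 ⟨q₂, γ₂, hdv ▸ d.2, rfl⟩, q₁, γ₀ ++ θ₀, ?_, ?_⟩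
    · rw [push_append]
    · intro n
      obtain ⟨n', hn', hlt⟩ := hinf.exists_gt n
      obtain ⟨m, hm, q₂', γ₂', hdv', hb⟩ := hf n'
      have hfn' : f n' = d := hn'
      rw [hfn', hdv] at hdv'
      simp only [Prod.mk.injEq] at hdv'
      obtain ⟨-, -, -, rfl, rfl⟩ := hdv'
      exact ⟨m, by omega, hb⟩

lemma main_linked {α β : List Γ} (hβ : β ≠ []) (hlp : P.LinkedPair α β) (q : Q)
    (γ : SC Γ) {i j : ℕ} (hij : i < j)
    (hbis : ∀ r ∈ P.eats α {q},
      P.Bisim (r, SC.push (listPow β i) γ) (r, SC.push (listPow β j) γ)) :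
    P.Bisim (q, SC.push (α ++ listPow β i) γ) (q, SC.push (α ++ listPow β j) γ) ∧
    P.Bisim (q, SC.push (α ++ listPow β i) γ) (q, SC.push α (cycSC β hβ)) ∧
    P.Bisim (q, SC.push (α ++ listPow β j) γ) (q, SC.push α (cycSC β hβ)) := by
  have part1 : P.Bisim (q, SC.push (α ++ listPow β i) γ)
      (q, SC.push (α ++ listPow β j) γ) := by
    have h := chain P hlp q γ hij hbis 1
    have e : i + 1 * (j - i) = j := by omega
    rw [e] at h
    exact h
  have part2 : P.Bisim (q, SC.push (α ++ listPow β i) γ)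
      (q, SC.push α (cycSC β hβ)) := by
    apply bisim_omega
    intro n
    refine ⟨i + n * (j - i), ?_, chain P hlp q γ hij hbis n⟩
    have h1 : 1 ≤ j - i := by omega
    have h2 : n * 1 ≤ n * (j - i) := Nat.mul_le_mul_left n h1
    omega
  exact ⟨part1, part2, bisim_trans P (bisim_symm P part1) part2⟩

end PDSAux

/-- For a linked pair `(α, β)`: if `rβ^iγ ∼ rβ^jγ` for all `r ∈ eats_α(q)` and
`i ≠ j`, then `qαβ^iγ ∼ qαβ^jγ ∼ qαβ^ω`. -/
theorem stmt_11 (Q Γ A : Type) (P : PDS Q Γ A) (q : Q) (α β : List Γ) (hβ : β ≠ [])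
    (hlp : P.LinkedPair α β) (γ γ' : SC Γ) (i j : ℕ)
    (hbis : ∀ r ∈ P.eats α {q},
      P.Bisim (r, SC.push (listPow β i) γ) (r, SC.push (listPow β j) γ))
    (hij : i ≠ j) :
    P.Bisim (q, SC.push (α ++ listPow β i) γ) (q, SC.push (α ++ listPow β j) γ) ∧
    P.Bisim (q, SC.push (α ++ listPow β i) γ) (q, SC.push α (cycSC β hβ)) ∧
    P.Bisim (q, SC.push (α ++ listPow β j) γ) (q, SC.push α (cycSC β hβ)) := by
  rcases lt_or_gt_of_ne hij with h | h
  · exact PDSAux.main_linked P hβ hlp q γ h hbis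
  · obtain ⟨p1, p2, p3⟩ := PDSAux.main_linked P hβ hlp q γ h
      (fun r hr => PDSAux.bisim_symm P (hbis r hr))
    exact ⟨PDSAux.bisim_symm P p1, p3, p2⟩
end

section
/- For every pushdown system P = (Q, Γ, A, Δ), let U, V ⊆ Q and assume that for all p ∈ U there are r_p ∈ Q and χ_p ∈ Γ⁺ such that eats_{χ_p}(r_p) ⊆ V, and conversely for all r ∈ V there are p_r ∈ Q and ξ_r ∈ Γ⁺ such that eats_{ξ_r}(p_r) ⊆ U. If for some μ₁, μ₂, ν₁, ν₂ ∈ RegStr(Γ) we have, for all i ∈ {1, 2}: pμ_i ∼ r_p χ_p ν_i for all p ∈ U, and rν_i ∼ p_r ξ_r μ_i for all r ∈ V, then pμ₁ ∼ pμ₂ for all p ∈ U and rν₁ ∼ rν₂ for all r ∈ V. -/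
section LoopingAux

namespace SC

variable {Γ : Type}

theorem push_nil (ω : SC Γ) : push ([] : List Γ) ω = ω := by
  cases ω <;> simp [push, Stream'.nil_append_stream] <;> rfl

theorem push_cons (X : Γ) (l : List Γ) (ω : SC Γ) :
    push (X :: l) ω = cons X (push l ω) := by
  cases ω <;> simp [push, cons, Stream'.cons_append_stream] <;> rfl

theorem push_push (γ σ : List Γ) (ω : SC Γ) :
    push γ (push σ ω) = push (γ ++ σ) ω := by
  cases ω <;> simp [push, Stream'.append_append_stream] <;> rfl

theorem cons_inj {X Y : Γ} {σ τ : SC Γ} (h : cons X σ = cons Y τ) :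
    X = Y ∧ σ = τ := by
  cases σ with
  | inl l =>
    cases τ with
    | inl l' =>
      simp only [cons] at h; injection h with h; injection h with h1 h2
      exact ⟨h1, congrArg Sum.inl h2⟩
    | inr s => simp only [cons] at h; injection h
  | inr s =>
    cases τ with
    | inl l' => simp only [cons] at h; injection h
    | inr s' =>
      simp only [cons] at h; injection h with h
      refine ⟨by have := congrArg Stream'.head h; simpa using this, ?_⟩
      have := congrArg Stream'.tail h
      simp only [Stream'.tail_cons] at this
      exact congrArg Sum.inr this

end SC

namespace PDS

variable {Q Γ A : Type} {P : PDS Q Γ A}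

theorem bisim_refl (P : PDS Q Γ A) (s : Q × SC Γ) : P.Bisim s s :=
  ⟨Eq, fun s t h a => by
    subst h; exact ⟨fun s' h => ⟨s', h, rfl⟩, fun t' h => ⟨t', h, rfl⟩⟩, rfl⟩

theorem bisim_symm {s t : Q × SC Γ} (h : P.Bisim s t) : P.Bisim t s := by
  obtain ⟨R, hR, hst⟩ := h
  refine ⟨fun x y => R y x, fun x y hxy a => ?_, hst⟩
  exact ⟨fun s' hs' => ((hR y x hxy a).2 s' hs').imp fun t' ⟨h1, h2⟩ => ⟨h1, h2⟩,
         fun t' ht' => ((hR y x hxy a).1 t' ht').imp fun s' ⟨h1, h2⟩ => ⟨h1, h2⟩⟩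

theorem bisim_trans {s t u : Q × SC Γ} (h1 : P.Bisim s t) (h2 : P.Bisim t u) :
    P.Bisim s u := by
  obtain ⟨R1, hR1, hst⟩ := h1
  obtain ⟨R2, hR2, htu⟩ := h2
  refine ⟨fun x z => ∃ y, R1 x y ∧ R2 y z, ?_, t, hst, htu⟩
  rintro x z ⟨y, hxy, hyz⟩ a
  constructor
  · intro x' hx'
    obtain ⟨y', hy', hr1⟩ := (hR1 x y hxy a).1 x' hx'
    obtain ⟨z', hz', hr2⟩ := (hR2 y z hyz a).1 y' hy'
    exact ⟨z', hz', y', hr1, hr2⟩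
  · intro z' hz'
    obtain ⟨y', hy', hr2⟩ := (hR2 y z hyz a).2 z' hz'
    obtain ⟨x', hx', hr1⟩ := (hR1 x y hxy a).2 y' hy'
    exact ⟨x', hx', y', hr1, hr2⟩

theorem bisim_isBisim (P : PDS Q Γ A) : P.IsBisim P.Bisim := by
  rintro s t ⟨R, hR, hst⟩ a
  exact ⟨fun s' hs' => ((hR s t hst a).1 s' hs').imp fun t' ⟨h1, h2⟩ => ⟨h1, R, hR, h2⟩,
         fun t' ht' => ((hR s t hst a).2 t' ht').imp fun s' ⟨h1, h2⟩ => ⟨h1, R, hR, h2⟩⟩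

theorem step_cons_iff {a : A} {q : Q} {X : Γ} {τ : SC Γ} {t : Q × SC Γ} :
    P.Step a (q, SC.cons X τ) t ↔
      ∃ q' γ, (q, X, a, q', γ) ∈ P.Δ ∧ t = (q', SC.push γ τ) := by
  constructor
  · rintro ⟨p, X', q', γ, σ, hδ, heq, rfl⟩
    rw [Prod.mk.injEq] at heq
    obtain ⟨h1, h2⟩ := heq
    obtain ⟨h3, h4⟩ := SC.cons_inj h2
    subst h1; subst h3; subst h4
    exact ⟨q', γ, hδ, rfl⟩
  · rintro ⟨q', γ, hδ, rfl⟩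
    exact ⟨q, X, q', γ, τ, hδ, rfl, rfl⟩

theorem mem_eats_nil (P : PDS Q Γ A) (q : Q) : q ∈ P.eats [] {q} :=
  ⟨q, rfl, Relation.ReflTransGen.refl⟩

theorem eats_step {a : A} {q : Q} {X : Γ} {q' : Q} {γ : List Γ}
    (hδ : (q, X, a, q', γ) ∈ P.Δ) (σ : List Γ) :
    P.eats (γ ++ σ) {q'} ⊆ P.eats (X :: σ) {q} := by
  rintro r ⟨q'', hq'', hreach⟩
  rw [Set.mem_singleton_iff] at hq''
  rw [hq''] at hreach
  exact ⟨q, rfl,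
    Relation.ReflTransGen.head ⟨a, q, X, q', γ, Sum.inl σ, hδ, rfl, rfl⟩ hreach⟩

/-- Step matching for one layer of the looping-lemma relation. -/
theorem step_match (P : PDS Q Γ A) (W W' : Set Q) (f : Q → Q) (ζ : Q → List Γ)
    (ω₁ ω₂ ω₁' ω₂' : SC Γ)
    (hζ : ∀ q ∈ W, ζ q ≠ [] ∧ P.eats (ζ q) {f q} ⊆ W')
    (h1 : ∀ q ∈ W, P.Bisim (q, ω₁) (f q, SC.push (ζ q) ω₁'))
    (h2 : ∀ q ∈ W, P.Bisim (q, ω₂) (f q, SC.push (ζ q) ω₂'))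
    (q : Q) (σ : List Γ) (hσ : P.eats σ {q} ⊆ W) (a : A) (s₁ : Q × SC Γ)
    (hs : P.Step a (q, SC.push σ ω₁) s₁) :
    ∃ t₁ s₁' t₁', P.Step a (q, SC.push σ ω₂) t₁ ∧ P.Bisim s₁ s₁' ∧ P.Bisim t₁' t₁ ∧
      ((∃ q' σ', P.eats σ' {q'} ⊆ W ∧ s₁' = (q', SC.push σ' ω₁) ∧
          t₁' = (q', SC.push σ' ω₂)) ∨
       (∃ q' σ', P.eats σ' {q'} ⊆ W' ∧ s₁' = (q', SC.push σ' ω₁') ∧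
          t₁' = (q', SC.push σ' ω₂'))) := by
  match σ with
  | X :: σ'' =>
    rw [SC.push_cons] at hs
    obtain ⟨q', γ, hδ, rfl⟩ := step_cons_iff.mp hs
    refine ⟨(q', SC.push (γ ++ σ'') ω₂), (q', SC.push (γ ++ σ'') ω₁),
      (q', SC.push (γ ++ σ'') ω₂), ?_, ?_, P.bisim_refl _,
      Or.inl ⟨q', γ ++ σ'', (P.eats_step hδ σ'').trans hσ, rfl, rfl⟩⟩
    · rw [SC.push_cons, ← SC.push_push]
      exact ⟨q, X, q', γ, SC.push σ'' ω₂, hδ, rfl, rfl⟩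
    · rw [SC.push_push]
      exact P.bisim_refl _
  | [] =>
    rw [SC.push_nil] at hs
    have hq : q ∈ W := hσ (P.mem_eats_nil q)
    obtain ⟨hne, hsub⟩ := hζ q hq
    obtain ⟨s₁'', hstep'', hbis₁⟩ := (P.bisim_isBisim _ _ (h1 q hq) a).1 s₁ hs
    obtain ⟨X, rest, hXrest⟩ := List.exists_cons_of_ne_nil hne
    rw [hXrest, SC.push_cons] at hstep''
    obtain ⟨q', γ, hδ, rfl⟩ := step_cons_iff.mp hstep''
    have hstep2 : P.Step a (f q, SC.push (ζ q) ω₂') (q', SC.push (γ ++ rest) ω₂') := by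
      rw [hXrest, SC.push_cons, ← SC.push_push]
      exact ⟨f q, X, q', γ, SC.push rest ω₂', hδ, rfl, rfl⟩
    obtain ⟨t₁, hstept, hbis₂⟩ := (P.bisim_isBisim _ _ (h2 q hq) a).2 _ hstep2
    have hsub' : P.eats (γ ++ rest) {q'} ⊆ W' := by
      refine (P.eats_step hδ rest).trans ?_
      rw [← hXrest]; exact hsub
    refine ⟨t₁, (q', SC.push (γ ++ rest) ω₁'), (q', SC.push (γ ++ rest) ω₂'),
      by rw [SC.push_nil]; exact hstept, ?_, P.bisim_symm hbis₂,
      Or.inr ⟨q', γ ++ rest, hsub', rfl, rfl⟩⟩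
    have : SC.push γ (SC.push rest ω₁') = SC.push (γ ++ rest) ω₁' := SC.push_push _ _ _
    rw [← this]
    exact hbis₁

end PDS

end LoopingAux

/-- The looping lemma: given `U, V ⊆ Q` with, for each `p ∈ U`, some `r_p` and
nonempty `χ_p` with `eats_{χ_p}(r_p) ⊆ V`, and conversely for each `r ∈ V` some `p_r`
and nonempty `ξ_r` with `eats_{ξ_r}(p_r) ⊆ U`: if `pμᵢ ∼ r_p χ_p νᵢ` for all `p ∈ U`
and `rνᵢ ∼ p_r ξ_r μᵢ` for all `r ∈ V` (`i ∈ {1,2}`), then `pμ₁ ∼ pμ₂` for all `p ∈ U`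
and `rν₁ ∼ rν₂` for all `r ∈ V`. -/
theorem stmt_12 (Q Γ A : Type) (P : PDS Q Γ A) (U V : Set Q)
    (rp pr : Q → Q) (χ ξ : Q → List Γ)
    (hχ : ∀ p ∈ U, χ p ≠ [] ∧ P.eats (χ p) {rp p} ⊆ V)
    (hξ : ∀ r ∈ V, ξ r ≠ [] ∧ P.eats (ξ r) {pr r} ⊆ U)
    (μ₁ μ₂ ν₁ ν₂ : SC Γ)
    (hU₁ : ∀ p ∈ U, P.Bisim (p, μ₁) (rp p, SC.push (χ p) ν₁))
    (hU₂ : ∀ p ∈ U, P.Bisim (p, μ₂) (rp p, SC.push (χ p) ν₂))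
    (hV₁ : ∀ r ∈ V, P.Bisim (r, ν₁) (pr r, SC.push (ξ r) μ₁))
    (hV₂ : ∀ r ∈ V, P.Bisim (r, ν₂) (pr r, SC.push (ξ r) μ₂)) :
    (∀ p ∈ U, P.Bisim (p, μ₁) (p, μ₂)) ∧ (∀ r ∈ V, P.Bisim (r, ν₁) (r, ν₂)) := by
  set T : (Q × SC Γ) → (Q × SC Γ) → Prop := fun s t =>
    (∃ q σ, P.eats σ {q} ⊆ U ∧ s = (q, SC.push σ μ₁) ∧ t = (q, SC.push σ μ₂)) ∨
    (∃ q σ, P.eats σ {q} ⊆ V ∧ s = (q, SC.push σ ν₁) ∧ t = (q, SC.push σ ν₂))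
    with hTdef
  set R : (Q × SC Γ) → (Q × SC Γ) → Prop := fun s t =>
    ∃ s' t', P.Bisim s s' ∧ T s' t' ∧ P.Bisim t' t with hRdef
  have hχ1 : ∀ p ∈ U, χ p ≠ [] ∧ P.eats (χ p) {rp p} ⊆ V := hχ
  have hξ1 : ∀ r ∈ V, ξ r ≠ [] ∧ P.eats (ξ r) {pr r} ⊆ U := hξ
  have hbisR : P.IsBisim R := by
    rintro s t ⟨s', t', hss', hT', ht't⟩ a
    constructor
    · rintro s₁ hstep
      obtain ⟨s₁', hstep', hb₁⟩ := (P.bisim_isBisim _ _ hss' a).1 s₁ hstep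
      rcases hT' with ⟨q, σ, hσ, rfl, rfl⟩ | ⟨q, σ, hσ, rfl, rfl⟩
      · obtain ⟨u, A', B', hstepu, hbA, hbB, hor⟩ :=
          P.step_match U V rp χ μ₁ μ₂ ν₁ ν₂ hχ1 hU₁ hU₂ q σ hσ a s₁' hstep'
        obtain ⟨t₁, hstept, hb₂⟩ := (P.bisim_isBisim _ _ ht't a).1 u hstepu
        exact ⟨t₁, hstept, A', B', P.bisim_trans hb₁ hbA, hor,
          P.bisim_trans hbB hb₂⟩
      · obtain ⟨u, A', B', hstepu, hbA, hbB, hor⟩ :=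
          P.step_match V U pr ξ ν₁ ν₂ μ₁ μ₂ hξ1 hV₁ hV₂ q σ hσ a s₁' hstep'
        obtain ⟨t₁, hstept, hb₂⟩ := (P.bisim_isBisim _ _ ht't a).1 u hstepu
        exact ⟨t₁, hstept, A', B', P.bisim_trans hb₁ hbA, hor.symm,
          P.bisim_trans hbB hb₂⟩
    · rintro t₁ hstep
      obtain ⟨t₁', hstep', hb₁⟩ := (P.bisim_isBisim _ _ ht't a).2 t₁ hstep
      rcases hT' with ⟨q, σ, hσ, rfl, rfl⟩ | ⟨q, σ, hσ, rfl, rfl⟩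
      · obtain ⟨u, A', B', hstepu, hbA, hbB, hor⟩ :=
          P.step_match U V rp χ μ₂ μ₁ ν₂ ν₁ hχ1 hU₂ hU₁ q σ hσ a t₁' hstep'
        obtain ⟨s₁, hsteps, hb₂⟩ := (P.bisim_isBisim _ _ hss' a).2 u hstepu
        refine ⟨s₁, hsteps, B', A', P.bisim_trans hb₂ (P.bisim_symm hbB), ?_,
          P.bisim_trans (P.bisim_symm hbA) hb₁⟩
        rcases hor with ⟨q', σ', hsub, e1, e2⟩ | ⟨q', σ', hsub, e1, e2⟩
        · exact Or.inl ⟨q', σ', hsub, e2, e1⟩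
        · exact Or.inr ⟨q', σ', hsub, e2, e1⟩
      · obtain ⟨u, A', B', hstepu, hbA, hbB, hor⟩ :=
          P.step_match V U pr ξ ν₂ ν₁ μ₂ μ₁ hξ1 hV₂ hV₁ q σ hσ a t₁' hstep'
        obtain ⟨s₁, hsteps, hb₂⟩ := (P.bisim_isBisim _ _ hss' a).2 u hstepu
        refine ⟨s₁, hsteps, B', A', P.bisim_trans hb₂ (P.bisim_symm hbB), ?_,
          P.bisim_trans (P.bisim_symm hbA) hb₁⟩
        rcases hor with ⟨q', σ', hsub, e1, e2⟩ | ⟨q', σ', hsub, e1, e2⟩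
        · exact Or.inr ⟨q', σ', hsub, e2, e1⟩
        · exact Or.inl ⟨q', σ', hsub, e2, e1⟩
  have eats_nil_sub : ∀ (W : Set Q) (q : Q), q ∈ W → P.eats [] {q} ⊆ W := by
    rintro W q hqW r ⟨q', hq', hreach⟩
    rw [Set.mem_singleton_iff] at hq'
    subst hq'
    rcases Relation.ReflTransGen.cases_head hreach with heq | ⟨u, hstep, _⟩
    · replace heq := Prod.mk.inj heq
      rw [← heq.1]; exact hqW
    · exfalso
      obtain ⟨a, p, X, q'', γ, τ, _, heq, _⟩ := hstep
      replace heq := Prod.mk.inj heq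
      have h2 := heq.2
      cases τ with
      | inl l => simp only [SC.cons] at h2; injection h2 with h2; exact absurd h2 (by simp)
      | inr st => simp only [SC.cons] at h2; injection h2
  constructor
  · intro p hp
    refine ⟨R, hbisR, (p, μ₁), (p, μ₂), P.bisim_refl _,
      Or.inl ⟨p, [], eats_nil_sub U p hp, ?_, ?_⟩, P.bisim_refl _⟩ <;>
      rw [SC.push_nil]
  · intro r hr
    refine ⟨R, hbisR, (r, ν₁), (r, ν₂), P.bisim_refl _,
      Or.inr ⟨r, [], eats_nil_sub V r hr, ?_, ?_⟩, P.bisim_refl _⟩ <;>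
      rw [SC.push_nil]
end

section
/- For every pushdown system P = (Q, Γ, A, Δ), every linked pair (α, β), and every configuration qαβ^eγ of P with e ≥ 1: if qαβ^{e−d}γ ≁ qαβ^ω for all d ∈ [1, e], then (1) there exists a β^ω-avoiding digging sequence (r₀) of length one for (q, α, β), and (2) every β^ω-avoiding digging sequence (r₀, r₁, …, r_h) for (q, α, β) with h < e can be extended by a control state r_{h+1} to yield a longer β^ω-avoiding digging sequence (r₀, …, r_h, r_{h+1}) for (q, α, β). -/
section Aux

variable {Q Γ A : Type}

lemma SC.push_push_s13 (γ θ : List Γ) (μ : SC Γ) :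
    SC.push γ (SC.push θ μ) = SC.push (γ ++ θ) μ := by
  cases μ with
  | inl l => simp [SC.push, List.append_assoc]; rfl
  | inr s => simp [SC.push, Stream'.append_append_stream]; rfl

lemma SC.push_cons_s13 (X : Γ) (θ : List Γ) (μ : SC Γ) :
    SC.push (X :: θ) μ = SC.cons X (SC.push θ μ) := by
  cases μ with
  | inl l => rfl
  | inr s => simp [SC.push, SC.cons, Stream'.cons_append_stream]; rfl

lemma SC.push_nil_s13 (μ : SC Γ) : SC.push ([] : List Γ) μ = μ := by
  cases μ with
  | inl l => rfl
  | inr s => simp [SC.push, Stream'.nil_append_stream]; rfl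

lemma SC.cons_inj_s13 {X Y : Γ} {σ τ : SC Γ} (h : SC.cons X σ = SC.cons Y τ) :
    X = Y ∧ σ = τ := by
  cases σ with
  | inl l =>
    cases τ with
    | inl l' =>
      have hh : X :: l = Y :: l' := Sum.inl.inj h
      exact ⟨(List.cons.injEq .. ▸ hh).1, congrArg Sum.inl (List.cons.injEq .. ▸ hh).2⟩
    | inr s' => simp [SC.cons] at h
  | inr s =>
    cases τ with
    | inl l' => simp [SC.cons] at h
    | inr s' =>
      have hh : Stream'.cons X s = Stream'.cons Y s' := Sum.inr.inj h
      have hX : X = Y := by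
        have h2 := congrArg Stream'.head hh; simpa using h2
      have hs : s = s' := by
        have h2 := congrArg Stream'.tail hh; simpa using h2
      exact ⟨hX, by rw [hs]⟩

lemma bisim_isBisim (P : PDS Q Γ A) : P.IsBisim P.Bisim := by
  rintro s t ⟨R, hR, hst⟩ a
  obtain ⟨h1, h2⟩ := hR s t hst a
  constructor
  · intro s' hs'
    obtain ⟨t', ht', hR'⟩ := h1 s' hs'
    exact ⟨t', ht', R, hR, hR'⟩
  · intro t' ht'
    obtain ⟨s', hs', hR'⟩ := h2 t' ht'
    exact ⟨s', hs', R, hR, hR'⟩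

lemma step_cons_elim {P : PDS Q Γ A} {a : A} {p : Q} {X : Γ} {σ : SC Γ} {s' : Q × SC Γ}
    (h : P.Step a (p, SC.cons X σ) s') :
    ∃ q γ, (p, X, a, q, γ) ∈ P.Δ ∧ s' = (q, SC.push γ σ) := by
  obtain ⟨p0, X0, q, γ, τ, hδ, hs, hs'⟩ := h
  have hp : p0 = p := (Prod.mk.injEq _ _ _ _ ▸ hs).1.symm ▸ rfl
  have hp0 : p = p0 ∧ SC.cons X σ = SC.cons X0 τ := by
    constructor
    · exact congrArg Prod.fst hs
    · exact congrArg Prod.snd hs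
  obtain ⟨hXeq, hσeq⟩ := SC.cons_inj_s13 hp0.2
  subst hs'
  exact ⟨q, γ, by rw [hp0.1, hXeq]; exact hδ, by rw [hσeq]⟩

lemma step_cons_intro {P : PDS Q Γ A} {a : A} {p : Q} {X : Γ} (σ : SC Γ) {q : Q} {γ : List Γ}
    (hδ : (p, X, a, q, γ) ∈ P.Δ) :
    P.Step a (p, SC.cons X σ) (q, SC.push γ σ) :=
  ⟨p, X, q, γ, σ, hδ, rfl, rfl⟩

/-- A finite-config step lifted: if `(p,X,a,q,γ) ∈ Δ` then `p(X::θ) →_a q(γ++θ)`. -/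
lemma step_inl_intro {P : PDS Q Γ A} {a : A} {p : Q} {X : Γ} (θ : List Γ) {q : Q} {γ : List Γ}
    (hδ : (p, X, a, q, γ) ∈ P.Δ) :
    P.Step a (p, Sum.inl (X :: θ)) (q, Sum.inl (γ ++ θ)) :=
  ⟨p, X, q, γ, Sum.inl θ, hδ, rfl, rfl⟩

/-- Lifting a finite reach under a fixed bottom stack `μ`. -/
lemma reach_push {P : PDS Q Γ A} (μ : SC Γ) {p p' : Q} {θ θ' : List Γ}
    (h : P.Reach (p, Sum.inl θ) (p', Sum.inl θ')) :
    P.Reach (p, SC.push θ μ) (p', SC.push θ' μ) := by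
  have key : ∀ s, P.Reach s (p', Sum.inl θ') → ∀ (p0 : Q) (θ0 : List Γ),
      s = (p0, Sum.inl θ0) → P.Reach (p0, SC.push θ0 μ) (p', SC.push θ' μ) := by
    intro s hs
    induction hs using Relation.ReflTransGen.head_induction_on with
    | refl =>
      intro p0 θ0 hs0
      obtain ⟨h1, h2⟩ := Prod.mk.injEq .. ▸ hs0
      cases h2
      cases h1
      exact Relation.ReflTransGen.refl
    | head hstep _ ih =>
      intro p0 θ0 hs0
      subst hs0
      obtain ⟨a, hstep⟩ := hstep
      cases θ0 with
      | nil =>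
        exfalso
        obtain ⟨pp, XX, qq, γγ, ττ, _, heq, _⟩ := hstep
        have := congrArg Prod.snd heq
        cases ττ with
        | inl l => simp [SC.cons] at this
        | inr s => simp [SC.cons] at this
      | cons X θt =>
        obtain ⟨qq, γγ, hδ, hu⟩ :=
          step_cons_elim (show P.Step a (p0, SC.cons X (Sum.inl θt)) _ from hstep)
        subst hu
        have ih' := ih qq (γγ ++ θt) rfl
        refine Relation.ReflTransGen.head ⟨a, ?_⟩ ih'
        rw [SC.push_cons_s13, ← SC.push_push_s13]
        exact step_cons_intro _ hδ
  exact key _ h p θ rfl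

/-- Composition of eats: membership in `eats (θ₁ ++ θ₂)` from factored runs. -/
lemma eats_comp_intro {P : PDS Q Γ A} {θ₁ θ₂ : List Γ} {q r0 r : Q}
    (h1 : r0 ∈ P.eats θ₁ {q}) (h2 : r ∈ P.eats θ₂ {r0}) :
    r ∈ P.eats (θ₁ ++ θ₂) {q} := by
  obtain ⟨q1, hq1, hr1⟩ := h1
  obtain ⟨q2, hq2, hr2⟩ := h2
  cases hq1; cases hq2
  refine ⟨q, rfl, ?_⟩
  have h1' := reach_push (Sum.inl θ₂) hr1
  simp only [SC.push] at h1'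
  have : P.Reach (q, Sum.inl (θ₁ ++ θ₂)) (r0, Sum.inl θ₂) := by
    simpa using h1'
  exact this.trans hr2

/-- Decomposition: a run emptying `θ₁ ++ θ₂` passes through `(r0, θ₂)`. -/
lemma eats_comp_elim {P : PDS Q Γ A} {θ₁ θ₂ : List Γ} {q r : Q}
    (h : r ∈ P.eats (θ₁ ++ θ₂) {q}) :
    ∃ r0, r0 ∈ P.eats θ₁ {q} ∧ r ∈ P.eats θ₂ {r0} := by
  obtain ⟨q1, hq1, hr⟩ := h
  cases hq1
  have key : ∀ s, P.Reach s (r, Sum.inl ([] : List Γ)) → ∀ (p : Q) (θ₁ θ₂ : List Γ),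
      s = (p, Sum.inl (θ₁ ++ θ₂)) →
      ∃ r0, P.Reach (p, Sum.inl θ₁) (r0, Sum.inl ([] : List Γ)) ∧
        P.Reach (r0, Sum.inl θ₂) (r, Sum.inl ([] : List Γ)) := by
    intro s hs
    induction hs using Relation.ReflTransGen.head_induction_on with
    | refl =>
      intro p θ₁ θ₂ hs0
      obtain ⟨h1, h2⟩ := Prod.mk.injEq .. ▸ hs0
      cases h1
      have h3 : θ₁ ++ θ₂ = [] := (Sum.inl.inj h2).symm
      obtain ⟨e1, e2⟩ := List.append_eq_nil_iff.mp h3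
      subst e1; subst e2
      exact ⟨r, Relation.ReflTransGen.refl, Relation.ReflTransGen.refl⟩
    | head hstep hrest ih =>
      intro p θ₁ θ₂ hs0
      subst hs0
      cases θ₁ with
      | nil =>
        exact ⟨p, Relation.ReflTransGen.refl,
          Relation.ReflTransGen.head hstep hrest⟩
      | cons X θt =>
        obtain ⟨a, hstep⟩ := hstep
        obtain ⟨qq, γγ, hδ, hu⟩ :=
          step_cons_elim (show P.Step a (p, SC.cons X (Sum.inl (θt ++ θ₂))) _ from hstep)
        subst hu
        obtain ⟨r0, hA, hB⟩ := ih qq (γγ ++ θt) θ₂ (by simp [SC.push, List.append_assoc]; rfl)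
        exact ⟨r0, Relation.ReflTransGen.head ⟨a, step_inl_intro θt hδ⟩ hA, hB⟩
  obtain ⟨r0, hA, hB⟩ := key _ hr q θ₁ θ₂ rfl
  exact ⟨r0, ⟨q, rfl, hA⟩, ⟨r0, rfl, hB⟩⟩

/-- Key congruence lemma: if all emptying states of `θ` agree on `μ` vs `ν`,
then `pθμ ∼ pθν`. -/
lemma key_bisim (P : PDS Q Γ A) (μ ν : SC Γ) (θ : List Γ) (p : Q)
    (H : ∀ r ∈ P.eats θ {p}, P.Bisim (r, μ) (r, ν)) :
    P.Bisim (p, SC.push θ μ) (p, SC.push θ ν) := by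
  refine ⟨fun s t => P.Bisim s t ∨ ∃ θ' p', s = (p', SC.push θ' μ) ∧ t = (p', SC.push θ' ν) ∧
      ∀ r ∈ P.eats θ' {p'}, P.Bisim (r, μ) (r, ν), ?_, Or.inr ⟨θ, p, rfl, rfl, H⟩⟩
  rintro s t (hb | ⟨θ', p', rfl, rfl, H'⟩) a
  · obtain ⟨h1, h2⟩ := bisim_isBisim P s t hb a
    constructor
    · intro s' hs'
      obtain ⟨t', ht', hb'⟩ := h1 s' hs'
      exact ⟨t', ht', Or.inl hb'⟩
    · intro t' ht'
      obtain ⟨s', hs', hb'⟩ := h2 t' ht'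
      exact ⟨s', hs', Or.inl hb'⟩
  · cases θ' with
    | nil =>
      rw [SC.push_nil_s13, SC.push_nil_s13]
      have hb : P.Bisim (p', μ) (p', ν) :=
        H' p' ⟨p', rfl, Relation.ReflTransGen.refl⟩
      obtain ⟨h1, h2⟩ := bisim_isBisim P (p', μ) (p', ν) hb a
      constructor
      · intro s' hs'
        obtain ⟨t', ht', hb'⟩ := h1 s' hs'
        exact ⟨t', ht', Or.inl hb'⟩
      · intro t' ht'
        obtain ⟨s', hs', hb'⟩ := h2 t' ht'
        exact ⟨s', hs', Or.inl hb'⟩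
    | cons X θt =>
      have Hsub : ∀ (qq : Q) (γγ : List Γ), (p', X, a, qq, γγ) ∈ P.Δ →
          ∀ r ∈ P.eats (γγ ++ θt) {qq}, P.Bisim (r, μ) (r, ν) := by
        intro qq γγ hδ r hr
        obtain ⟨q1, hq1, hrr⟩ := hr
        cases hq1
        exact H' r ⟨p', rfl,
          Relation.ReflTransGen.head ⟨a, step_inl_intro θt hδ⟩ hrr⟩
      constructor
      · intro s' hs'
        rw [SC.push_cons_s13] at hs'
        obtain ⟨qq, γγ, hδ, rfl⟩ := step_cons_elim hs'
        refine ⟨(qq, SC.push γγ (SC.push θt ν)), ?_, ?_⟩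
        · rw [SC.push_cons_s13]
          exact step_cons_intro _ hδ
        · exact Or.inr ⟨γγ ++ θt, qq, by rw [SC.push_push_s13], by rw [SC.push_push_s13],
            Hsub qq γγ hδ⟩
      · intro t' ht'
        rw [SC.push_cons_s13] at ht'
        obtain ⟨qq, γγ, hδ, rfl⟩ := step_cons_elim ht'
        refine ⟨(qq, SC.push γγ (SC.push θt μ)), ?_, ?_⟩
        · rw [SC.push_cons_s13]
          exact step_cons_intro _ hδ
        · exact Or.inr ⟨γγ ++ θt, qq, by rw [SC.push_push_s13], by rw [SC.push_push_s13],
            Hsub qq γγ hδ⟩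

lemma push_cycSC {β : List Γ} (hβ : β ≠ []) :
    SC.push β (cycSC β hβ) = cycSC β hβ := by
  simp only [cycSC, SC.push]
  rw [← Stream'.cycle_eq]

lemma push_listPow {β : List Γ} (l : List Γ) (n : ℕ) :
    SC.push β (Sum.inl (listPow β n ++ l) : SC Γ) = Sum.inl (listPow β (n + 1) ++ l) := by
  simp [SC.push, listPow, List.append_assoc]; rfl

end Aux
/-- If `qαβ^{e−d}γ ≁ qαβ^ω` for all `d ∈ [1, e]` (where `(α, β)` is a linked pair and
`e ≥ 1`), then (1) there exists a `β^ω`-avoiding digging sequence of length one for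
`(q, α, β)`, and (2) every `β^ω`-avoiding digging sequence `(r₀, …, r_h)` with `h < e`
can be extended by one control state to a longer `β^ω`-avoiding digging sequence. -/
theorem stmt_13 (Q Γ A : Type) (P : PDS Q Γ A) (q : Q) (α β γ : List Γ) (hβ : β ≠ [])
    (hlp : P.LinkedPair α β) (e : ℕ) (he : 1 ≤ e)
    (hnotbis : ∀ d, 1 ≤ d → d ≤ e →
      ¬ P.Bisim (q, Sum.inl (α ++ listPow β (e - d) ++ γ)) (q, SC.push α (cycSC β hβ))) :
    (∃ r : ℕ → Q, Avoiding P q α β γ hβ e 0 r) ∧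
    (∀ (h : ℕ) (r : ℕ → Q), Avoiding P q α β γ hβ e h r → h < e →
      ∃ rN : Q, Avoiding P q α β γ hβ e (h + 1) (fun d => if d ≤ h then r d else rN)) := by
  constructor
  · -- part (1)
    by_contra hne
    push_neg at hne
    have Hall : ∀ r ∈ P.eats α {q},
        P.Bisim (r, Sum.inl (listPow β (e - 1) ++ γ)) (r, cycSC β hβ) := by
      intro r hr
      have hr2 : r ∈ P.eats (α ++ β) {q} := by
        rw [← hlp.2.1]; exact hr
      obtain ⟨r0, hA, hB⟩ := eats_comp_elim hr2
      by_contra hbis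
      exact hne (fun _ => r0)
        ⟨⟨hA, by intro d h1 h2; omega⟩, ⟨r, hB, hbis⟩, by intro d h1 h2; omega⟩
    have hkey := key_bisim P (Sum.inl (listPow β (e - 1) ++ γ)) (cycSC β hβ) α q Hall
    apply hnotbis 1 le_rfl he
    simpa [SC.push, List.append_assoc] using hkey
  · -- part (2)
    rintro h r ⟨⟨hd0, hdstep⟩, ⟨r', hr'mem, hr'nb⟩, havoid⟩ hhe
    by_cases hh : h = 0
    · subst hh
      refine ⟨r', ⟨?_, ?_⟩, ?_, ?_⟩
      · simpa using hd0
      · intro d h1 h2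
        have hd : d = 1 := by omega
        subst hd
        simpa using hr'mem
      · exact ⟨r', by simpa using hr'mem, hr'nb⟩
      · intro d h1 h2
        have hd : d = 1 := by omega
        subst hd
        simpa using hr'nb
    · have hnb := havoid h (by omega) le_rfl
      have hex : ¬ ∀ rN ∈ P.eats β {r h},
          P.Bisim (rN, Sum.inl (listPow β (e - h - 1) ++ γ)) (rN, cycSC β hβ) := by
        intro HallN
        apply hnb
        have hk := key_bisim P (Sum.inl (listPow β (e - h - 1) ++ γ)) (cycSC β hβ) β (r h) HallN
        rw [push_cycSC, push_listPow] at hk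
        have heq : e - h - 1 + 1 = e - h := by omega
        rwa [heq] at hk
      push_neg at hex
      obtain ⟨rN, hmem, hnb'⟩ := hex
      refine ⟨rN, ⟨?_, ?_⟩, ?_, ?_⟩
      · simpa using hd0
      · intro d h1 h2
        by_cases hdh : d ≤ h
        · have hdh' : d - 1 ≤ h := by omega
          simpa [hdh, hdh'] using hdstep d h1 hdh
        · have hd : d = h + 1 := by omega
          subst hd
          simpa [hdh] using hmem
      · exact ⟨r', by simpa using hr'mem, hr'nb⟩
      · intro d h1 h2
        by_cases hdh : d ≤ h
        · simpa [hdh] using havoid d h1 hdh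
        · have hd : d = h + 1 := by omega
          subst hd
          have heq : e - (h + 1) = e - h - 1 := by omega
          simpa [hdh, heq] using hnb'
end

section
/- For every pushdown system P = (Q, Γ, A, Δ) in push-pop normal form, setting g(|P|, |α|, |β|, k) = (|α| + |β|) · |P|^{k+2}: for every linked pair (α, β), every q ∈ Q, every k ∈ ℕ, and every run η starting from the configuration qαβ^ω that visits more than g(|P|, |α|, |β|, k) distinct configurations, there exists a contiguous subrun η₁η₂⋯η_k of η such that all of η₁, …, η_k are augmenting and nonempty. -/
/-! ### Auxiliary lemmas for `stmt_15` -/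

section StmtAux

open Stream'

variable {Q Γ A : Type}

private lemma sc_cons_inj {X : Γ} {σ σ' : SC Γ} (h : SC.cons X σ = SC.cons X σ') : σ = σ' := by
  cases σ with
  | inl l =>
    cases σ' with
    | inl l' =>
      have h' : (Sum.inl (X :: l) : List Γ ⊕ Stream' Γ) = Sum.inl (X :: l') := h
      injection h' with h''
      injection h'' with _ h3
      exact congrArg Sum.inl h3
    | inr s' =>
      have h' : (Sum.inl (X :: l) : List Γ ⊕ Stream' Γ) = Sum.inr (Stream'.cons X s') := h
      exact absurd h' (by simp)
  | inr s =>
    cases σ' with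
    | inl l' =>
      have h' : (Sum.inr (Stream'.cons X s) : List Γ ⊕ Stream' Γ) = Sum.inl (X :: l') := h
      exact absurd h' (by simp)
    | inr s' =>
      have h' : (Sum.inr (Stream'.cons X s) : List Γ ⊕ Stream' Γ) = Sum.inr (Stream'.cons X s') := h
      injection h' with h''
      have h3 := congrArg Stream'.tail h''
      simp only [Stream'.tail_cons] at h3
      exact congrArg Sum.inr h3

private lemma tstep_det (P : PDS Q Γ A) {δ : Q × Γ × A × Q × List Γ} {s t t' : Q × SC Γ}
    (h : P.TStep δ s t) (h' : P.TStep δ s t') : t = t' := by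
  obtain ⟨-, σ, hs, ht⟩ := h
  obtain ⟨-, σ', hs', ht'⟩ := h'
  rw [hs] at hs'
  have hσ : σ = σ' := sc_cons_inj (congrArg Prod.snd hs')
  rw [ht, ht', hσ]

private lemma runTo_det (P : PDS Q Γ A) : ∀ (ρ : List (Q × Γ × A × Q × List Γ))
    {s t t' : Q × SC Γ}, P.RunTo ρ s t → P.RunTo ρ s t' → t = t' := by
  intro ρ
  induction ρ with
  | nil => intro s t t' h h'; exact h.symm.trans h'
  | cons δ ρ ih =>
    rintro s t t' ⟨u, hu, hr⟩ ⟨u', hu', hr'⟩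
    have huu : u = u' := tstep_det P hu hu'
    exact ih (huu ▸ hr) hr'

private lemma runTo_append (P : PDS Q Γ A) : ∀ (ρ₁ ρ₂ : List (Q × Γ × A × Q × List Γ))
    (s t : Q × SC Γ), P.RunTo (ρ₁ ++ ρ₂) s t ↔ ∃ u, P.RunTo ρ₁ s u ∧ P.RunTo ρ₂ u t := by
  intro ρ₁
  induction ρ₁ with
  | nil =>
    intro ρ₂ s t
    simp only [List.nil_append]
    constructor
    · intro h; exact ⟨s, rfl, h⟩
    · rintro ⟨u, hu, h⟩; have : s = u := hu; exact this ▸ h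
  | cons δ ρ ih =>
    intro ρ₂ s t
    constructor
    · rintro ⟨u, hu, hv⟩
      obtain ⟨v, hv1, hv2⟩ := (ih ρ₂ u t).1 hv
      exact ⟨v, ⟨u, hu, hv1⟩, hv2⟩
    · rintro ⟨v, ⟨u, hu, hv1⟩, hv2⟩
      exact ⟨u, hu, (ih ρ₂ u t).2 ⟨v, hv1, hv2⟩⟩

private lemma runTo_take (P : PDS Q Γ A) {ρ : List (Q × Γ × A × Q × List Γ)}
    {s t : Q × SC Γ} (h : P.RunTo ρ s t) (i : ℕ) : ∃ u, P.RunTo (ρ.take i) s u := by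
  have heq := List.take_append_drop i ρ
  rw [← heq, runTo_append] at h
  obtain ⟨u, hu, -⟩ := h
  exact ⟨u, hu⟩

private lemma runTo_mem (P : PDS Q Γ A) : ∀ (ρ : List (Q × Γ × A × Q × List Γ))
    {s t : Q × SC Γ}, P.RunTo ρ s t → ∀ δ ∈ ρ, δ ∈ P.Δ := by
  intro ρ
  induction ρ with
  | nil => intro s t h δ hδ; simp at hδ
  | cons δ' ρ ih =>
    rintro s t ⟨u, hu, hr⟩ δ hδ
    rcases List.mem_cons.1 hδ with h | h
    · exact h ▸ hu.1
    · exact ih hr δ h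

private lemma runGrowth_append (a b : List (Q × Γ × A × Q × List Γ)) :
    runGrowth (a ++ b) = runGrowth a + runGrowth b := by
  simp [runGrowth]

private lemma list_take_add {γ : Type*} (l : List γ) (a b : ℕ) :
    l.take (a + b) = l.take a ++ (l.drop a).take b := by
  rw [List.take_drop]
  conv_lhs => rw [← List.take_append_drop a (l.take (a + b))]
  congr 1
  rw [List.take_take]
  congr 1
  omega

private lemma growth_take_succ {l : List (Q × Γ × A × Q × List Γ)} {i : ℕ}
    {δ : Q × Γ × A × Q × List Γ} (h : l[i]? = some δ) :
    runGrowth (l.take (i + 1)) = runGrowth (l.take i) + tGrowth δ := by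
  rw [List.take_succ, h, runGrowth_append]
  simp [runGrowth]

private lemma argmin_exists (G : ℕ → ℤ) : ∀ N : ℕ, ∃ j ≤ N, ∀ i ≤ N, G j ≤ G i := by
  intro N
  induction N with
  | zero =>
    refine ⟨0, le_refl 0, fun i hi => ?_⟩
    rw [Nat.le_zero.1 hi]
  | succ N ih =>
    obtain ⟨j, hj, hmin⟩ := ih
    by_cases h : G (N + 1) < G j
    · refine ⟨N + 1, le_refl _, fun i hi => ?_⟩
      rcases Nat.eq_or_lt_of_le hi with h' | h'
      · rw [h']
      · exact le_trans h.le (hmin i (Nat.lt_succ_iff.1 h'))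
    · refine ⟨j, hj.trans (Nat.le_succ N), fun i hi => ?_⟩
      rcases Nat.eq_or_lt_of_le hi with h' | h'
      · rw [h']; exact not_lt.1 h
      · exact hmin i (Nat.lt_succ_iff.1 h')

private lemma build_t (G : ℕ → ℤ) (hstep : ∀ i, G (i + 1) ≤ G i + 1) (k : ℕ) (hk : 1 ≤ k)
    (i₀ j₀ : ℕ) (hj : j₀ ≤ i₀) (hgap : G j₀ + k ≤ G i₀) :
    ∃ t : ℕ → ℕ, (∀ j < k, t j < t (j + 1)) ∧ t k = i₀ ∧
      ∀ j < k, ∀ i, t j ≤ i → i ≤ t (j + 1) → G (t j) ≤ G i := by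
  classical
  obtain ⟨j₁, hj₁, hminp⟩ := argmin_exists G i₀
  set m : ℤ := G j₁ with hm
  have hik : m + k ≤ G i₀ := by
    have h1 := hminp j₀ hj
    linarith
  set t : ℕ → ℕ := fun ℓ =>
    if ℓ < k then Nat.findGreatest (fun s => G s ≤ m + ℓ) i₀ else i₀ with ht
  have htlt : ∀ ℓ, ℓ < k → t ℓ = Nat.findGreatest (fun s => G s ≤ m + ℓ) i₀ := by
    intro ℓ hℓ; simp [ht, hℓ]
  have htge : ∀ ℓ, ¬ ℓ < k → t ℓ = i₀ := by
    intro ℓ hℓ; simp [ht, hℓ]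
  have hA : ∀ ℓ, t ℓ ≤ i₀ := by
    intro ℓ
    by_cases h : ℓ < k
    · rw [htlt ℓ h]; exact Nat.findGreatest_le i₀
    · rw [htge ℓ h]
  have hB : ∀ ℓ, ℓ < k → G (t ℓ) ≤ m + ℓ := by
    intro ℓ hℓ
    rw [htlt ℓ hℓ]
    refine Nat.findGreatest_spec (P := fun s => G s ≤ m + ℓ) hj₁ ?_
    have h0 : (0 : ℤ) ≤ (ℓ : ℤ) := Int.natCast_nonneg ℓ
    show G j₁ ≤ m + (ℓ : ℤ)
    rw [hm]
    linarith
  have hC : ∀ ℓ, ℓ < k → ∀ s, t ℓ < s → s ≤ i₀ → m + ℓ < G s := by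
    intro ℓ hℓ s hs1 hs2
    have := Nat.findGreatest_is_greatest (P := fun s => G s ≤ m + ℓ)
      (by rw [← htlt ℓ hℓ]; exact hs1) hs2
    exact not_le.1 this
  have hE : ∀ ℓ, ℓ < k → t ℓ < i₀ := by
    intro ℓ hℓ
    have h1 : G (t ℓ) ≤ m + ℓ := hB ℓ hℓ
    have h2 : (ℓ : ℤ) < (k : ℤ) := by exact_mod_cast hℓ
    have hne : t ℓ ≠ i₀ := by
      intro heq
      rw [heq] at h1
      linarith
    exact lt_of_le_of_ne (hA ℓ) hne
  have hD : ∀ ℓ, ℓ < k → G (t ℓ) = m + ℓ := by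
    intro ℓ hℓ
    refine le_antisymm (hB ℓ hℓ) ?_
    have h1 := hC ℓ hℓ (t ℓ + 1) (Nat.lt_succ_self _) (hE ℓ hℓ)
    have h2 := hstep (t ℓ)
    linarith
  have hmono : ∀ j, j < k → t j < t (j + 1) := by
    intro j hjk
    have hle : t j ≤ t (j + 1) := by
      by_cases h : j + 1 < k
      · rw [htlt (j + 1) h]
        refine Nat.le_findGreatest (hA j) ?_
        have := hD j hjk
        push_cast
        push_cast at this
        linarith
      · rw [htge (j + 1) h]; exact hA j
    refine lt_of_le_of_ne hle ?_
    intro heq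
    have h1 := hD j hjk
    by_cases h : j + 1 < k
    · have h2 := hD (j + 1) h
      rw [← heq] at h2
      rw [h1] at h2
      push_cast at h2
      linarith
    · have h2 : t (j + 1) = i₀ := htge (j + 1) h
      rw [← heq] at h2
      rw [h2] at h1
      have h3 : (j : ℤ) < (k : ℤ) := by exact_mod_cast hjk
      linarith
  refine ⟨t, hmono, htge k (lt_irrefl k), ?_⟩
  intro j hjk i h1 h2
  rcases Nat.eq_or_lt_of_le h1 with h' | h'
  · rw [← h']
  · have h3 : i ≤ i₀ := le_trans h2 (hA (j + 1))
    have h4 := hC j hjk i h' h3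
    rw [hD j hjk]
    exact h4.le

private lemma t_chain {t : ℕ → ℕ} {k : ℕ} (h : ∀ j < k, t j ≤ t (j + 1)) :
    ∀ b ≤ k, ∀ a ≤ b, t a ≤ t b := by
  intro b
  induction b with
  | zero => intro _ a ha; rw [Nat.le_zero.1 ha]
  | succ b ih =>
    intro hb a ha
    rcases Nat.eq_or_lt_of_le ha with h' | h'
    · rw [h']
    · exact le_trans (ih (by omega) a (by omega)) (h b (by omega))

private lemma take_glue {γ : Type*} (η : List γ) {a b c : ℕ} (hab : a ≤ b) (hbc : b ≤ c) :
    (η.drop a).take (b - a) ++ (η.drop b).take (c - b) = (η.drop a).take (c - a) := by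
  have h1 : c - a = (b - a) + (c - b) := by omega
  rw [h1, list_take_add]
  have h2 : (η.drop a).drop (b - a) = η.drop b := by
    rw [List.drop_drop]
    congr 1
    omega
  rw [h2]

private lemma foldr_slices {γ : Type*} (η : List γ) :
    ∀ (k : ℕ) (t : ℕ → ℕ), (∀ j < k, t j ≤ t (j + 1)) →
    (((List.range k).map fun j => (η.drop (t j)).take (t (j + 1) - t j)).foldr (· ++ ·) []) =
      (η.drop (t 0)).take (t k - t 0) := by
  intro k
  induction k with
  | zero => intro t _; simp
  | succ k ih =>
    intro t hmono
    rw [List.range_succ_eq_map, List.map_cons, List.foldr_cons, List.map_map]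
    have hmono' : ∀ j < k, (fun j => t (j + 1)) j ≤ (fun j => t (j + 1)) (j + 1) :=
      fun j hj => hmono (j + 1) (by omega)
    have hIH := ih (fun j => t (j + 1)) hmono'
    have hcomp : ((fun j => (η.drop (t j)).take (t (j + 1) - t j)) ∘ Nat.succ)
        = fun j => (η.drop (t (j + 1))).take (t (j + 1 + 1) - t (j + 1)) := rfl
    rw [hcomp, hIH]
    exact take_glue η (hmono 0 (by omega)) (t_chain hmono' k (le_refl k) 0 (Nat.zero_le k))

private lemma ext_decomp (η : List (Q × Γ × A × Q × List Γ)) (k : ℕ) (t : ℕ → ℕ)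
    (hmono : ∀ j < k, t j < t (j + 1)) (hend : t k ≤ η.length)
    (hwin : ∀ j < k, ∀ i, t j ≤ i → i ≤ t (j + 1) →
      runGrowth (η.take (t j)) ≤ runGrowth (η.take i)) :
    ∃ (ρ₀ ρ₂ : List (Q × Γ × A × Q × List Γ)) (parts : List (List (Q × Γ × A × Q × List Γ))),
      η = ρ₀ ++ parts.foldr (· ++ ·) [] ++ ρ₂ ∧
      parts.length = k ∧
      ∀ part ∈ parts, Augmenting part ∧ part ≠ [] := by
  have hle : ∀ j < k, t j ≤ t (j + 1) := fun j hj => (hmono j hj).le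
  have hchain := t_chain hle
  refine ⟨η.take (t 0), η.drop (t k),
    (List.range k).map fun j => (η.drop (t j)).take (t (j + 1) - t j), ?_, by simp, ?_⟩
  · rw [foldr_slices η k t hle]
    have h0k : t 0 ≤ t k := hchain k (le_refl k) 0 (Nat.zero_le k)
    have hmid : (η.drop (t 0)).take (t k - t 0) ++ η.drop (t k) = η.drop (t 0) := by
      have h := List.drop_take_append_drop η (t 0) (t k - t 0)
      rw [show t 0 + (t k - t 0) = t k by omega] at h
      exact h
    rw [List.append_assoc, hmid, List.take_append_drop]
  · intro part hpart
    simp only [List.mem_map, List.mem_range] at hpart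
    obtain ⟨j, hj, rfl⟩ := hpart
    have hmj := hmono j hj
    have hj1k : t (j + 1) ≤ t k := hchain k (le_refl k) (j + 1) hj
    have hjlen : t j < η.length := lt_of_lt_of_le (lt_of_lt_of_le (hmono j hj) hj1k) hend
    constructor
    · intro i hi
      have hlen : ((η.drop (t j)).take (t (j + 1) - t j)).length
          = min (t (j + 1) - t j) (η.length - t j) := by
        rw [List.length_take, List.length_drop]
      have hi' : i ≤ t (j + 1) - t j := by
        rw [hlen] at hi
        omega
      have htake : ((η.drop (t j)).take (t (j + 1) - t j)).take i = (η.drop (t j)).take i := by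
        rw [List.take_take]
        congr 1
        omega
      rw [htake]
      have hsplit : runGrowth (η.take (t j + i))
          = runGrowth (η.take (t j)) + runGrowth ((η.drop (t j)).take i) := by
        rw [list_take_add, runGrowth_append]
      have hw := hwin j hj (t j + i) (Nat.le_add_right _ _) (by omega)
      rw [hsplit] at hw
      linarith
    · have hpos : 0 < min (t (j + 1) - t j) (η.length - t j) := by
        have := hmono j hj
        omega
      intro hnil
      have := congrArg List.length hnil
      rw [List.length_take, List.length_drop, List.length_nil] at this
      omega

private lemma run_inv (P : PDS Q Γ A) (q : Q) (s₀ : Stream' Γ)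
    (η : List (Q × Γ × A × Q × List Γ)) (sfin : Q × SC Γ)
    (hrun : P.RunTo η (q, Sum.inr s₀) sfin) :
    ∀ i : ℕ, ∃ (r : Q) (w : List Γ) (d : ℕ),
      P.RunTo (η.take i) (q, Sum.inr s₀)
        (r, Sum.inr (Stream'.appendStream' w (Stream'.drop d s₀))) ∧
      (w.length : ℤ) = runGrowth (η.take i) + d ∧
      ∃ j ≤ i, (d : ℤ) ≤ 1 - runGrowth (η.take j) := by
  intro i
  induction i with
  | zero =>
    refine ⟨q, [], 0, ?_, by simp [runGrowth], ⟨0, le_refl 0, by simp [runGrowth]⟩⟩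
    show (q, Sum.inr s₀) = _
    rw [Stream'.nil_append_stream, Stream'.drop_zero]
    rfl
  | succ i ih =>
    obtain ⟨r, w, d, hr, hlen, j, hj, hd⟩ := ih
    by_cases hi : i < η.length
    case neg =>
      have hts : η.take (i + 1) = η.take i := by
        rw [List.take_of_length_le (by omega), List.take_of_length_le (by omega)]
      rw [← hts] at hr hlen
      exact ⟨r, w, d, hr, hlen, j, by omega, hd⟩
    case pos =>
      have hδ : η[i]? = some (η[i]'hi) := List.getElem?_eq_getElem hi
      set δ := η[i]'hi with hδdef
      have htse : η.take (i + 1) = η.take i ++ [δ] := by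
        rw [List.take_succ, hδ]
        rfl
      have hgs : runGrowth (η.take (i + 1)) = runGrowth (η.take i) + tGrowth δ := by
        rw [htse, runGrowth_append]
        simp [runGrowth]
      obtain ⟨u', hu'⟩ := runTo_take P hrun (i + 1)
      rw [htse, runTo_append] at hu'
      obtain ⟨u, hu, hstep⟩ := hu'
      obtain ⟨v, hv, hvu⟩ := hstep
      have hvu' : v = u' := hvu
      subst hvu'
      have huval : u = (r, Sum.inr (Stream'.appendStream' w (Stream'.drop d s₀))) :=
        runTo_det P _ hu hr
      have hvkeep := hv
      obtain ⟨hδΔ, σ, hus, hts⟩ := hv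
      rw [huval] at hus
      have hstack : Sum.inr (Stream'.appendStream' w (Stream'.drop d s₀)) = SC.cons δ.2.1 σ :=
        congrArg Prod.snd hus
      cases σ with
      | inl l =>
        have h' : (Sum.inr (Stream'.appendStream' w (Stream'.drop d s₀)) : List Γ ⊕ Stream' Γ)
            = Sum.inl (δ.2.1 :: l) := hstack
        exact absurd h' (by simp)
      | inr τ =>
        have h' : (Sum.inr (Stream'.appendStream' w (Stream'.drop d s₀)) : List Γ ⊕ Stream' Γ)
            = Sum.inr (Stream'.cons δ.2.1 τ) := hstack
        have hstack : Stream'.appendStream' w (Stream'.drop d s₀) = Stream'.cons δ.2.1 τ := by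
          injection h'
        clear h'
        cases w with
        | nil =>
          rw [Stream'.nil_append_stream] at hstack
          have hτ : τ = Stream'.drop (d + 1) s₀ := by
            rw [← Stream'.tail_drop', hstack, Stream'.tail_cons]
          refine ⟨δ.2.2.2.1, δ.2.2.2.2, d + 1, ?_, ?_, ⟨i, by omega, ?_⟩⟩
          · rw [htse, runTo_append]
            refine ⟨u, hu, v, hvkeep, ?_⟩
            show v = _
            rw [hts, hτ]
            rfl
          · rw [hgs]
            simp only [List.length_nil, Nat.cast_zero] at hlen
            simp only [tGrowth]
            push_cast
            linarith
          · simp only [List.length_nil, Nat.cast_zero] at hlen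
            push_cast
            linarith
        | cons Y w₂ =>
          rw [Stream'.cons_append_stream] at hstack
          have hτ : τ = Stream'.appendStream' w₂ (Stream'.drop d s₀) := by
            have := congrArg Stream'.tail hstack
            simpa [Stream'.tail_cons] using this.symm
          refine ⟨δ.2.2.2.1, δ.2.2.2.2 ++ w₂, d, ?_, ?_, ⟨j, by omega, hd⟩⟩
          · rw [htse, runTo_append]
            refine ⟨u, hu, v, hvkeep, ?_⟩
            show v = _
            rw [hts, hτ]
            simp [SC.push, Stream'.append_append_stream]
          · rw [hgs]
            simp only [List.length_cons] at hlen
            simp only [tGrowth, List.length_append]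
            push_cast
            push_cast at hlen
            linarith

private lemma drop_cycle_reduce {Γ : Type} (α β : List Γ) (hβ : β ≠ []) :
    ∀ d : ℕ, ∃ d' < α.length + β.length,
      Stream'.drop d' (Stream'.appendStream' α (Stream'.cycle β hβ))
        = Stream'.drop d (Stream'.appendStream' α (Stream'.cycle β hβ)) := by
  have hβ0 : 0 < β.length := List.length_pos_iff.2 hβ
  have h1 : ∀ c : ℕ, Stream'.drop (c + α.length) (Stream'.appendStream' α (Stream'.cycle β hβ))
      = Stream'.drop c (Stream'.cycle β hβ) := by
    intro c
    rw [Nat.add_comm, ← Stream'.drop_drop, Stream'.drop_append_stream]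
  have h2 : ∀ e : ℕ, Stream'.drop (e + β.length) (Stream'.cycle β hβ)
      = Stream'.drop e (Stream'.cycle β hβ) := by
    intro e
    conv_lhs => rw [Stream'.cycle_eq]
    rw [Nat.add_comm, ← Stream'.drop_drop, Stream'.drop_append_stream]
  have key : ∀ d : ℕ, α.length + β.length ≤ d →
      Stream'.drop d (Stream'.appendStream' α (Stream'.cycle β hβ))
        = Stream'.drop (d - β.length) (Stream'.appendStream' α (Stream'.cycle β hβ)) := by
    intro d hd
    have e1 : d = (d - β.length - α.length + β.length) + α.length := by omega
    have e2 : d - β.length = (d - β.length - α.length) + α.length := by omega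
    calc Stream'.drop d (Stream'.appendStream' α (Stream'.cycle β hβ))
        = Stream'.drop ((d - β.length - α.length + β.length) + α.length)
            (Stream'.appendStream' α (Stream'.cycle β hβ)) := by rw [← e1]
      _ = Stream'.drop (d - β.length - α.length + β.length) (Stream'.cycle β hβ) := h1 _
      _ = Stream'.drop (d - β.length - α.length) (Stream'.cycle β hβ) := h2 _
      _ = Stream'.drop ((d - β.length - α.length) + α.length)
            (Stream'.appendStream' α (Stream'.cycle β hβ)) := (h1 _).symm
      _ = Stream'.drop (d - β.length) (Stream'.appendStream' α (Stream'.cycle β hβ)) := by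
            rw [← e2]
  intro d
  induction d using Nat.strong_induction_on with
  | _ d ih =>
    by_cases h : d < α.length + β.length
    · exact ⟨d, h, rfl⟩
    · push_neg at h
      obtain ⟨d', hd', heq⟩ := ih (d - β.length) (by omega)
      exact ⟨d', hd', heq.trans (key d h).symm⟩

private lemma list_eq_of_getElem? {γ : Type} {k : ℕ} {w w' : List γ} (h1 : w.length ≤ k)
    (h2 : w'.length ≤ k) (h : ∀ i : Fin k, w[(i : ℕ)]? = w'[(i : ℕ)]?) : w = w' := by
  apply List.ext_getElem?
  intro n
  by_cases hn : n < k
  · exact h ⟨n, hn⟩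
  · rw [List.getElem?_eq_none (by omega), List.getElem?_eq_none (by omega)]

end StmtAux
/-- With `g |P| |α| |β| k = (|α| + |β|) · |P|^(k+2)`: every run `η` from `qαβ^ω`
(`(α, β)` a linked pair) that visits more than `g |P| |α| |β| k` distinct
configurations contains a contiguous subrun that is a concatenation of `k`
nonempty augmenting runs. -/
theorem stmt_15 (Q Γ A : Type) [Fintype Q] [Fintype Γ] [Fintype A]
    (P : PDS Q Γ A) (hpp : P.PushPop) (q : Q) (α β : List Γ) (hβ : β ≠ [])
    (hlp : P.LinkedPair α β) (k : ℕ)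
    (η : List (Q × Γ × A × Q × List Γ)) (sfin : Q × SC Γ)
    (hrun : P.RunTo η (q, SC.push α (cycSC β hβ)) sfin)
    (hvisits : ∃ T : Finset (Q × SC Γ),
      T.card > (α.length + β.length) * P.size ^ (k + 2) ∧
      ∀ c ∈ T, ∃ i ≤ η.length, P.RunTo (η.take i) (q, SC.push α (cycSC β hβ)) c) :
    ∃ (ρ₀ ρ₂ : List (Q × Γ × A × Q × List Γ)) (parts : List (List (Q × Γ × A × Q × List Γ))),
      η = ρ₀ ++ parts.foldr (· ++ ·) [] ++ ρ₂ ∧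
      parts.length = k ∧
      ∀ part ∈ parts, Augmenting part ∧ part ≠ [] := by
  classical
  obtain ⟨T, hTcard, hT⟩ := hvisits
  have hrun' : P.RunTo η (q, Sum.inr (Stream'.appendStream' α (Stream'.cycle β hβ))) sfin := hrun
  have hT' : ∀ c ∈ T, ∃ i ≤ η.length,
      P.RunTo (η.take i) (q, Sum.inr (Stream'.appendStream' α (Stream'.cycle β hβ))) c := hT
  have hmem : ∀ δ ∈ η, δ ∈ P.Δ := runTo_mem P η hrun'
  have hstepG : ∀ i, runGrowth (η.take (i + 1)) ≤ runGrowth (η.take i) + 1 := by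
    intro i
    by_cases hi : i < η.length
    · have hδ : η[i]? = some (η[i]'hi) := List.getElem?_eq_getElem hi
      rw [growth_take_succ hδ]
      have h2 := hpp _ (hmem _ (List.getElem_mem hi))
      simp only [tGrowth]
      have h3 : ((η[i]'hi).2.2.2.2.length : ℤ) ≤ 2 := by exact_mod_cast h2
      linarith
    · rw [List.take_of_length_le (by omega), List.take_of_length_le (by omega)]
      linarith
  rcases Nat.eq_zero_or_pos k with rfl | hk
  · exact ⟨η, [], [], by simp, rfl, by simp⟩
  by_cases hgap : ∃ i ≤ η.length, ∃ j ≤ i,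
      runGrowth (η.take j) + (k : ℤ) ≤ runGrowth (η.take i)
  · obtain ⟨i₀, hi₀, j₀, hj₀, hg⟩ := hgap
    obtain ⟨t, hmono, hendk, hwin⟩ :=
      build_t (fun i => runGrowth (η.take i)) hstepG k hk i₀ j₀ hj₀ hg
    exact ext_decomp η k t hmono (by rw [hendk]; exact hi₀) hwin
  · exfalso
    push_neg at hgap
    have hinv := run_inv P q (Stream'.appendStream' α (Stream'.cycle β hβ)) η sfin hrun'
    have key : ∀ c ∈ T, ∃ (r : Q) (w : List Γ) (d' : ℕ),
        d' < α.length + β.length ∧ w.length ≤ k ∧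
        c = (r, Sum.inr (Stream'.appendStream' w
          (Stream'.drop d' (Stream'.appendStream' α (Stream'.cycle β hβ))))) := by
      intro c hc
      obtain ⟨i, hi, hrt⟩ := hT' c hc
      obtain ⟨r, w, d, hruni, hlen, j, hj, hd⟩ := hinv i
      have hceq := runTo_det P _ hrt hruni
      obtain ⟨d', hd', hdropeq⟩ := drop_cycle_reduce α β hβ d
      have hlt := hgap i hi j hj
      refine ⟨r, w, d', hd', by omega, by rw [hceq, hdropeq]; rfl⟩
    choose rr ww dd hdlt hwlen hceq using key
    have hginj : Function.Injective (fun c : {c // c ∈ T} =>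
        ((rr c.1 c.2, fun i : Fin k => (ww c.1 c.2)[(i : ℕ)]?, ⟨dd c.1 c.2, hdlt c.1 c.2⟩) :
          Q × (Fin k → Option Γ) × Fin (α.length + β.length))) := by
      intro c₁ c₂ hgc
      simp only [Prod.mk.injEq, Fin.mk.injEq] at hgc
      obtain ⟨h1, h2, h3⟩ := hgc
      have hw : ww c₁.1 c₁.2 = ww c₂.1 c₂.2 :=
        list_eq_of_getElem? (hwlen _ _) (hwlen _ _) (fun i => congrFun h2 i)
      apply Subtype.ext
      rw [hceq c₁.1 c₁.2, hceq c₂.1 c₂.2, h1, hw, h3]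
    have hcard : T.card ≤ Fintype.card (Q × (Fin k → Option Γ) × Fin (α.length + β.length)) := by
      rw [← Fintype.card_coe T]
      exact Fintype.card_le_of_injective _ hginj
    have hFcard : Fintype.card (Q × (Fin k → Option Γ) × Fin (α.length + β.length))
        = Fintype.card Q * ((Fintype.card Γ + 1) ^ k * (α.length + β.length)) := by
      simp [Fintype.card_fun]
    have hQ1 : 1 ≤ Fintype.card Q := Fintype.card_pos_iff.mpr ⟨q⟩
    have hszQ : Fintype.card Q ≤ P.size := by unfold PDS.size; omega
    have hszΓ : Fintype.card Γ + 1 ≤ P.size := by unfold PDS.size; omega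
    have e2 : Fintype.card Q * ((Fintype.card Γ + 1) ^ k * (α.length + β.length))
        ≤ (α.length + β.length) * P.size ^ (k + 2) := by
      have e1 : Fintype.card Q * (Fintype.card Γ + 1) ^ k ≤ P.size ^ (k + 1) := by
        calc Fintype.card Q * (Fintype.card Γ + 1) ^ k
            ≤ P.size * P.size ^ k := Nat.mul_le_mul hszQ (Nat.pow_le_pow_left hszΓ k)
          _ = P.size ^ (k + 1) := (pow_succ' P.size k).symm
      calc Fintype.card Q * ((Fintype.card Γ + 1) ^ k * (α.length + β.length))
          = Fintype.card Q * (Fintype.card Γ + 1) ^ k * (α.length + β.length) :=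
            (Nat.mul_assoc _ _ _).symm
        _ ≤ P.size ^ (k + 1) * (α.length + β.length) := Nat.mul_le_mul_right _ e1
        _ ≤ P.size ^ (k + 2) * (α.length + β.length) :=
            Nat.mul_le_mul_right _ (Nat.pow_le_pow_right (le_trans hQ1 hszQ) (by omega))
        _ = (α.length + β.length) * P.size ^ (k + 2) := Nat.mul_comm _ _
    omega
end

section
/- Let (S, ∘) be a finite semigroup and let s₁s₂⋯sₙ ∈ S* be a word with n ≥ 2^{9·|S|}. Then there exist indices j, k with 1 ≤ j < k ≤ 2^{9·|S|} such that the product s_{j+1} ∘ ⋯ ∘ s_k is an idempotent (i.e., equal to its own square) and s₁ ∘ ⋯ ∘ s_j = s₁ ∘ ⋯ ∘ s_k. -/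
namespace Stmt16Aux

variable {S : Type} [Semigroup S]

lemma prodSeg_append (w : ℕ → S) (i l₁ : ℕ) :
    ∀ l₂, prodSeg w i l₁ * prodSeg w (i + l₁ + 1) l₂ = prodSeg w i (l₁ + l₂ + 1)
  | 0 => by
      show prodSeg w i l₁ * w (i + l₁ + 1 + 1) = prodSeg w i l₁ * w (i + l₁ + 2)
      rfl
  | l₂ + 1 => by
      show prodSeg w i l₁ * (prodSeg w (i + l₁ + 1) l₂ * w (i + l₁ + 1 + l₂ + 2)) =
        prodSeg w i (l₁ + l₂ + 1) * w (i + (l₁ + l₂ + 1) + 2)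
      rw [← mul_assoc, prodSeg_append w i l₁ l₂]
      congr 2
      omega

lemma seg_comp (w : ℕ → S) {i j k : ℕ} (hij : i < j) (hjk : j < k) :
    prodSeg w i (j - i - 1) * prodSeg w j (k - j - 1) = prodSeg w i (k - i - 1) := by
  obtain ⟨d₁, rfl⟩ : ∃ d₁, j = i + d₁ + 1 := ⟨j - i - 1, by omega⟩
  obtain ⟨d₂, rfl⟩ : ∃ d₂, k = (i + d₁ + 1) + d₂ + 1 := ⟨k - (i + d₁ + 1) - 1, by omega⟩
  have h1 : i + d₁ + 1 - i - 1 = d₁ := by omega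
  have h2 : (i + d₁ + 1) + d₂ + 1 - (i + d₁ + 1) - 1 = d₂ := by omega
  have h3 : (i + d₁ + 1) + d₂ + 1 - i - 1 = d₁ + d₂ + 1 := by omega
  rw [h1, h2, h3, prodSeg_append]

def pw (t : S) : ℕ → S
  | 0 => t
  | s + 1 => t * pw t s

lemma pw_add (t : S) (b : ℕ) : ∀ a, pw t a * pw t b = pw t (a + b + 1)
  | 0 => by
      have h : (0 : ℕ) + b + 1 = b + 1 := by omega
      rw [h]
      rfl
  | a + 1 => by
      have h : a + 1 + b + 1 = (a + b + 1) + 1 := by omega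
      rw [h]
      show (t * pw t a) * pw t b = t * pw t (a + b + 1)
      rw [mul_assoc, pw_add t b a]

lemma pw_shift (t : S) (i j : ℕ) (h : pw t i = pw t j) :
    ∀ nd, pw t (i + nd) = pw t (j + nd)
  | 0 => h
  | nd + 1 => by
      show t * pw t (i + nd) = t * pw t (j + nd)
      rw [pw_shift t i j h nd]

lemma exists_idem_pw [Fintype S] (t : S) : ∃ s : ℕ, pw t s * pw t s = pw t s := by
  obtain ⟨i, j, hne, hij⟩ := Finite.exists_ne_map_eq_of_infinite (pw t)
  suffices H : ∀ i j : ℕ, i < j → pw t i = pw t j → ∃ s, pw t s * pw t s = pw t s by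
    rcases hne.lt_or_gt with h | h
    · exact H i j h hij
    · exact H j i h hij.symm
  clear hne hij i j
  intro i j hlt heq
  set d := j - i with hd
  have hd1 : 1 ≤ d := by omega
  have step : ∀ n, i ≤ n → pw t n = pw t (n + d) := by
    intro n hn
    have h := pw_shift t i j heq (n - i)
    have e1 : i + (n - i) = n := by omega
    have e2 : j + (n - i) = n + d := by omega
    rwa [e1, e2] at h
  have iter : ∀ c, ∀ n, i ≤ n → pw t n = pw t (n + c * d) := by
    intro c
    induction c with
    | zero => intro n hn; simp
    | succ c ih =>
        intro n hn
        have h1 := ih n hn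
        have h2 := step (n + c * d) (by omega)
        rw [h1, h2]
        have h3 : n + c * d + d = n + (c + 1) * d := by ring
        rw [h3]
  have hmul : i + 1 ≤ (i + 1) * d := Nat.le_mul_of_pos_right (i + 1) hd1
  refine ⟨(i + 1) * d - 1, ?_⟩
  set a := (i + 1) * d - 1 with ha
  have hai : i ≤ a := by omega
  rw [pw_add]
  have h4 : a + a + 1 = a + (i + 1) * d := by omega
  rw [h4]
  exact (iter (i + 1) a hai).symm

end Stmt16Aux

open Stmt16Aux

/-- For a finite semigroup `S` and a word `s₁ ⋯ sₙ` over `S` with `n ≥ 2^(9·|S|)`,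
there exist `1 ≤ j < k ≤ 2^(9·|S|)` such that `s_{j+1} ∘ ⋯ ∘ s_k` is an idempotent
and `s₁ ∘ ⋯ ∘ s_j = s₁ ∘ ⋯ ∘ s_k`. -/

theorem stmt_16 (S : Type) [Semigroup S] [Fintype S] (w : ℕ → S) (n : ℕ)
    (hn : n ≥ 2 ^ (9 * Fintype.card S)) :
    ∃ j k : ℕ, 1 ≤ j ∧ j < k ∧ k ≤ 2 ^ (9 * Fintype.card S) ∧
      prodSeg w j (k - j - 1) * prodSeg w j (k - j - 1) = prodSeg w j (k - j - 1) ∧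
      prodSeg w 0 (j - 1) = prodSeg w 0 (k - 1) := by
  classical
  have hS : Nonempty S := ⟨w 0⟩
  set m := Fintype.card S with hm
  have hm1 : 1 ≤ m := Fintype.card_pos
  set N := 2 ^ (9 * m) with hN
  set f : ℕ → S := fun x => prodSeg w 0 (x - 1) with hf
  have hmaps : ∀ x ∈ Finset.Icc 1 N, f x ∈ (Finset.univ : Finset S) :=
    fun x _ => Finset.mem_univ _
  have hcard : (Finset.univ : Finset S).card * (2 ^ m + 1) < (Finset.Icc 1 N).card := by
    rw [Finset.card_univ, ← hm, Nat.card_Icc]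
    have h1 : m < 2 ^ m := Nat.lt_two_pow_self
    have h5 : 2 ^ (2 * m + 1) ≤ N := by
      rw [hN]; exact Nat.pow_le_pow_right (by norm_num) (by omega)
    have h4 : 2 ^ m * (2 ^ m + 1) ≤ 2 ^ (2 * m + 1) := by
      have h0 : (1:ℕ) ≤ 2 ^ m := Nat.one_le_two_pow
      calc 2 ^ m * (2 ^ m + 1) ≤ 2 ^ m * (2 ^ m + 2 ^ m) :=
            Nat.mul_le_mul_left _ (by omega)
        _ = 2 ^ (2 * m + 1) := by ring
    have h2 : m * (2 ^ m + 1) < 2 ^ m * (2 ^ m + 1) :=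
      mul_lt_mul_of_pos_right h1 (by positivity)
    omega
  obtain ⟨q, -, hq⟩ := Finset.exists_lt_card_fiber_of_mul_lt_card_of_maps_to hmaps hcard
  set F : Finset ℕ := {x ∈ Finset.Icc 1 N | f x = q} with hF
  have hFmem : ∀ x ∈ F, (1 ≤ x ∧ x ≤ N) ∧ f x = q := by
    intro x hx
    rw [hF, Finset.mem_filter, Finset.mem_Icc] at hx
    exact hx.imp_left id
  set nn := F.card with hnn
  have hnn2 : 2 ^ m + 1 < nn := hq
  set e : Fin nn ↪o ℕ := F.orderEmbOfFin hnn.symm with he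
  have hemem : ∀ a : Fin nn, e a ∈ F := fun a => F.orderEmbOfFin_mem hnn.symm a
  have hemono : ∀ {a b : Fin nn}, a < b → e a < e b := fun h => e.strictMono h
  set c : ℕ → ℕ → S := fun i j => prodSeg w i (j - i - 1) with hc
  set V : Fin nn → Finset S :=
    fun a => ({b : Fin nn | a < b} : Finset (Fin nn)).image fun b => c (e a) (e b) with hV
  have memV : ∀ (x : S) (a₀ : Fin nn),
      x ∈ V a₀ ↔ ∃ b : Fin nn, a₀ < b ∧ c (e a₀) (e b) = x := by
    intro x a₀
    simp [hV]
  have hlt2 : ((Finset.univ : Finset S).powerset).card < (Finset.univ : Finset (Fin nn)).card := by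
    rw [Finset.card_powerset, Finset.card_univ, ← hm, Finset.card_univ, Fintype.card_fin]
    omega
  obtain ⟨a1, -, a2, -, hne, hVa⟩ :=
    Finset.exists_ne_map_eq_of_card_lt_of_maps_to hlt2
      (fun (a : Fin nn) _ => Finset.mem_powerset.mpr (Finset.subset_univ (V a)))
  have hord : ∃ a a' : Fin nn, a < a' ∧ V a = V a' := by
    rcases hne.lt_or_gt with h | h
    · exact ⟨a1, a2, h, hVa⟩
    · exact ⟨a2, a1, h, hVa.symm⟩
  obtain ⟨a, a', haa', hVeq⟩ := hord
  set t := c (e a) (e a') with ht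
  have hchain : ∀ s : ℕ, ∃ b : Fin nn, a' < b ∧ c (e a') (e b) = pw t s := by
    intro s
    induction s with
    | zero =>
        have h0 : t ∈ V a := (memV t a).mpr ⟨a', haa', rfl⟩
        rw [hVeq] at h0
        exact (memV t a').mp h0
    | succ s ih =>
        obtain ⟨b, hb, hcb⟩ := ih
        have comp : c (e a) (e a') * c (e a') (e b) = c (e a) (e b) :=
          seg_comp w (hemono haa') (hemono hb)
        rw [hcb] at comp
        have hmem : pw t (s + 1) ∈ V a := by
          refine (memV _ a).mpr ⟨b, lt_trans haa' hb, ?_⟩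
          show c (e a) (e b) = t * pw t s
          exact comp.symm
        rw [hVeq] at hmem
        exact (memV _ a').mp hmem
  obtain ⟨s, hs⟩ := exists_idem_pw t
  obtain ⟨b, hb, hcb⟩ := hchain s
  refine ⟨e a', e b, (hFmem _ (hemem a')).1.1, hemono hb, (hFmem _ (hemem b)).1.2, ?_, ?_⟩
  · show c (e a') (e b) * c (e a') (e b) = c (e a') (e b)
    rw [hcb]; exact hs
  · show f (e a') = f (e b)
    rw [(hFmem _ (hemem a')).2, (hFmem _ (hemem b)).2]
end
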